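/- arXiv:1610.03975 — 8 statements merged into one kernel-verified Lean document; each statement's English description precedes it below -/
import Mathlib

section
/- In the Euclidean plane ℝ², let b > 0, let E_b = {(x,y) : x² + (y/b)² = 1} be an ellipse, and let L = {(x,y) : y = mx + β} be a line with E_b ∩ L = ∅. Let (x_n) be a Douglas–Rachford sequence for the pair (E_b, L): x_{n+1} = x_n + (b_n − a_n) where a_n ∈ E_b is a nearest point of E_b to x_n and b_n ∈ L is the nearest point of L to 2a_n − x_n. Then ‖x_{n+1} − x_n‖ ≥ d(E_b, L) > 0 for all n, and ‖x_n‖ → ∞; i.e., the iterates tend to infinity linearly with step size at least d(E_b, L). -/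
open Metric Filter

private noncomputable def ellParam (b : ℝ) : ℝ → EuclideanSpace ℝ (Fin 2) :=
  fun t => (WithLp.equiv 2 (Fin 2 → ℝ)).symm ![Real.cos t, b * Real.sin t]

private lemma ellParam_cont (b : ℝ) : Continuous (ellParam b) := by
  unfold ellParam
  apply Continuous.comp
  · exact (PiLp.continuous_toLp 2 (fun _ : Fin 2 => ℝ))
  · apply continuous_pi
    intro i
    fin_cases i <;> simp <;> fun_prop

private lemma coord_abs_le_norm (p : EuclideanSpace ℝ (Fin 2)) (i : Fin 2) : |p i| ≤ ‖p‖ := by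
  rw [EuclideanSpace.norm_eq]
  have h1 : ‖p i‖ ^ 2 ≤ ∑ j, ‖p j‖ ^ 2 :=
    Finset.single_le_sum (f := fun j => ‖p j‖ ^ 2) (fun j _ => sq_nonneg _) (Finset.mem_univ i)
  have h2 := Real.sqrt_le_sqrt h1
  rwa [Real.sqrt_sq_eq_abs, abs_norm, Real.norm_eq_abs] at h2

/-- For a disjoint ellipse `E_b` and line `L` in the Euclidean plane, the
Douglas–Rachford iterates with nearest-point selections satisfy
`‖x_{n+1} − x_n‖ ≥ d(E_b, L) > 0` and `‖x n‖ → ∞`. -/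
theorem douglasRachford_ellipse_line_infeasible
    (b m β : ℝ) (hb : 0 < b)
    (E L : Set (EuclideanSpace ℝ (Fin 2)))
    (hE : E = {p : EuclideanSpace ℝ (Fin 2) | (p 0) ^ 2 + (p 1 / b) ^ 2 = 1})
    (hL : L = {p : EuclideanSpace ℝ (Fin 2) | p 1 = m * p 0 + β})
    (hdisj : E ∩ L = ∅)
    (x a c : ℕ → EuclideanSpace ℝ (Fin 2))
    (haE : ∀ n, a n ∈ E) (hanear : ∀ n, ‖x n - a n‖ = infDist (x n) E)
    (hcL : ∀ n, c n ∈ L)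
    (hcnear : ∀ n, ‖(2 • a n - x n) - c n‖ = infDist (2 • a n - x n) L)
    (hrec : ∀ n : ℕ, x (n + 1) = x n + (c n - a n)) :
    (∀ n : ℕ, sInf {d : ℝ | ∃ p ∈ E, ∃ q ∈ L, d = ‖p - q‖} ≤ ‖x (n + 1) - x n‖) ∧
      0 < sInf {d : ℝ | ∃ p ∈ E, ∃ q ∈ L, d = ‖p - q‖} ∧
      Tendsto (fun n : ℕ => ‖x n‖) atTop atTop := by
  have hbne : b ≠ 0 := ne_of_gt hb
  have hcoord : ∀ i : Fin 2, Continuous fun p : EuclideanSpace ℝ (Fin 2) => p i :=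
    fun i => (EuclideanSpace.proj i).continuous
  have hmemE : ∀ p : EuclideanSpace ℝ (Fin 2), p ∈ E ↔ (p 0) ^ 2 + (p 1 / b) ^ 2 = 1 := by
    intro p; rw [hE]; rfl
  have hmemL : ∀ p : EuclideanSpace ℝ (Fin 2), p ∈ L ↔ p 1 = m * p 0 + β := by
    intro p; rw [hL]; rfl
  -- E is closed
  have hEclosed : IsClosed E := by
    rw [hE]
    exact isClosed_eq (((hcoord 0).pow 2).add (((hcoord 1).div_const b).pow 2)) continuous_const
  -- E is bounded, hence compact
  have hEsub : E ⊆ closedBall 0 (1 + b) := by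
    intro p hp
    rw [hmemE] at hp
    have h0 : (p 0) ^ 2 ≤ 1 := by nlinarith [sq_nonneg (p 1 / b)]
    have h1 : (p 1 / b) ^ 2 ≤ 1 := by nlinarith [sq_nonneg (p 0)]
    have h1' : (p 1) ^ 2 ≤ b ^ 2 := by
      have : (p 1 / b) ^ 2 = (p 1) ^ 2 / b ^ 2 := by ring
      rw [this, div_le_one (by positivity)] at h1
      linarith
    rw [mem_closedBall_zero_iff, EuclideanSpace.norm_eq]
    have hsum : ∑ i, ‖p i‖ ^ 2 ≤ (1 + b) ^ 2 := by
      rw [Fin.sum_univ_two]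
      simp only [Real.norm_eq_abs, sq_abs]
      nlinarith
    calc Real.sqrt (∑ i, ‖p i‖ ^ 2) ≤ Real.sqrt ((1 + b) ^ 2) := Real.sqrt_le_sqrt hsum
      _ = 1 + b := by rw [Real.sqrt_sq (by linarith)]
  have hEcomp : IsCompact E := (isCompact_closedBall 0 (1 + b)).of_isClosed_subset hEclosed hEsub
  have hEne : E.Nonempty := by
    refine ⟨(WithLp.equiv 2 (Fin 2 → ℝ)).symm ![1, 0], ?_⟩
    rw [hmemE]
    simp [WithLp.equiv_symm_apply]
  have hLne : L.Nonempty := by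
    refine ⟨(WithLp.equiv 2 (Fin 2 → ℝ)).symm ![0, β], ?_⟩
    rw [hmemL]
    simp [WithLp.equiv_symm_apply]
  have hLclosed : IsClosed L := by
    rw [hL]
    exact isClosed_eq (hcoord 1) ((continuous_const.mul (hcoord 0)).add continuous_const)
  set S := {d : ℝ | ∃ p ∈ E, ∃ q ∈ L, d = ‖p - q‖} with hS
  have hSne : S.Nonempty := by
    obtain ⟨p, hp⟩ := hEne; obtain ⟨q, hq⟩ := hLne
    exact ⟨‖p - q‖, p, hp, q, hq, rfl⟩
  have hSbdd : BddBelow S := by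
    refine ⟨0, ?_⟩
    rintro d ⟨p, hp, q, hq, rfl⟩
    exact norm_nonneg _
  -- Part 1
  have part1 : ∀ n : ℕ, sInf S ≤ ‖x (n + 1) - x n‖ := by
    intro n
    have hdiff : x (n + 1) - x n = c n - a n := by rw [hrec n]; abel
    have : ‖x (n + 1) - x n‖ = ‖a n - c n‖ := by rw [hdiff, norm_sub_rev]
    rw [this]
    exact csInf_le hSbdd ⟨a n, haE n, c n, hcL n, rfl⟩
  -- Part 2
  obtain ⟨p₀, hp₀E, hp₀min'⟩ :=
    hEcomp.exists_isMinOn hEne (continuous_infDist_pt L).continuousOn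
  have hp₀min : ∀ q ∈ E, infDist p₀ L ≤ infDist q L := fun q hq => hp₀min' hq
  have hp₀notL : p₀ ∉ L := by
    intro h
    have : p₀ ∈ E ∩ L := ⟨hp₀E, h⟩
    rw [hdisj] at this
    exact this
  have hp₀pos : 0 < infDist p₀ L := (hLclosed.notMem_iff_infDist_pos hLne).1 hp₀notL
  have part2 : 0 < sInf S := by
    refine lt_of_lt_of_le hp₀pos (le_csInf hSne ?_)
    rintro d ⟨p, hp, q, hq, rfl⟩
    calc infDist p₀ L ≤ infDist p L := hp₀min p hp
      _ ≤ dist p q := infDist_le_dist_of_mem hq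
      _ = ‖p - q‖ := dist_eq_norm p q
  -- Part 3
  set f : EuclideanSpace ℝ (Fin 2) → ℝ := fun p => p 1 - (m * p 0 + β) with hf
  have hfcont : Continuous f := (hcoord 1).sub ((continuous_const.mul (hcoord 0)).add continuous_const)
  have hfne : ∀ p ∈ E, f p ≠ 0 := by
    intro p hp h0
    have hpL : p ∈ L := by rw [hmemL]; simpa [hf, sub_eq_zero] using h0
    have : p ∈ E ∩ L := ⟨hp, hpL⟩
    rw [hdisj] at this
    exact this
  -- E is connected: it is the range of ellParam b
  have hrange : Set.range (ellParam b) = E := by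
    ext p
    constructor
    · rintro ⟨t, rfl⟩
      rw [hmemE]
      simp only [ellParam, WithLp.equiv_symm_apply, WithLp.ofLp_toLp, Matrix.cons_val_zero, Matrix.cons_val_one,
        Matrix.head_cons]
      rw [mul_div_cancel_left₀ _ hbne]
      exact Real.cos_sq_add_sin_sq t
    · intro hp
      rw [hmemE] at hp
      have hu : (p 0) ^ 2 ≤ 1 := by nlinarith [sq_nonneg (p 1 / b)]
      have hu1 : -1 ≤ p 0 := by nlinarith [abs_nonneg (p 0)]
      have hu2 : p 0 ≤ 1 := by nlinarith [abs_nonneg (p 0)]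
      have hsq : Real.sqrt (1 - (p 0) ^ 2) = |p 1 / b| := by
        have : 1 - (p 0) ^ 2 = (p 1 / b) ^ 2 := by linarith
        rw [this, Real.sqrt_sq_eq_abs]
      refine ⟨if 0 ≤ p 1 then Real.arccos (p 0) else -Real.arccos (p 0), ?_⟩
      have hcos : Real.cos (if 0 ≤ p 1 then Real.arccos (p 0) else -Real.arccos (p 0)) = p 0 := by
        split_ifs <;> simp [Real.cos_arccos hu1 hu2]
      have hsin : b * Real.sin (if 0 ≤ p 1 then Real.arccos (p 0) else -Real.arccos (p 0))
          = p 1 := by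
        split_ifs with hsign
        · rw [Real.sin_arccos, hsq, abs_div, abs_of_nonneg hsign, abs_of_pos hb,
            mul_div_cancel₀ _ hbne]
        · rw [Real.sin_neg, Real.sin_arccos, hsq, abs_div, abs_of_neg (lt_of_not_ge hsign),
            abs_of_pos hb]
          field_simp
      simp only [ellParam]
      rw [Equiv.symm_apply_eq, hcos, hsin]
      funext i
      fin_cases i <;> rfl
  have hEconn : IsPreconnected E := hrange ▸ isPreconnected_range (ellParam_cont b)
  -- sign dichotomy
  have hdich : (∀ p ∈ E, 0 < f p) ∨ (∀ p ∈ E, f p < 0) := by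
    by_contra h
    push_neg at h
    obtain ⟨⟨p, hp, hple⟩, q, hq, hqge⟩ := h
    obtain ⟨r, hr, hr0⟩ := hEconn.intermediate_value₂ hp hq hfcont.continuousOn
      continuousOn_const hple hqge
    exact hfne r hr hr0
  -- abs bound for f
  have habs : ∀ p : EuclideanSpace ℝ (Fin 2), |f p| ≤ (1 + |m|) * ‖p‖ + |β| := by
    intro p
    have h0 := coord_abs_le_norm p 0
    have h1 := coord_abs_le_norm p 1
    have hm0 : |m * p 0| ≤ |m| * ‖p‖ := by
      rw [abs_mul]
      exact mul_le_mul_of_nonneg_left h0 (abs_nonneg m)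
    calc |f p| ≤ |p 1| + |m * p 0 + β| := abs_sub _ _
      _ ≤ |p 1| + (|m * p 0| + |β|) := by gcongr; exact abs_add_le _ _
      _ ≤ ‖p‖ + (|m| * ‖p‖ + |β|) := by gcongr
      _ = (1 + |m|) * ‖p‖ + |β| := by ring
  -- f recurrence
  have hfrec : ∀ n, f (x (n + 1)) = f (x n) + f (c n) - f (a n) := by
    intro n
    rw [hrec n]
    simp only [hf, PiLp.add_apply, PiLp.sub_apply]
    ring
  have hfL0 : ∀ n, f (c n) = 0 := by
    intro n
    have := (hmemL (c n)).1 (hcL n)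
    simp [hf, this]
  -- choose sign-normalized functional F
  obtain ⟨F, hFpos, hFcont, hFrec, hFabs⟩ :
      ∃ F : EuclideanSpace ℝ (Fin 2) → ℝ, (∀ p ∈ E, 0 < F p) ∧ Continuous F ∧
        (∀ n, F (x (n + 1)) = F (x n) - F (a n)) ∧
        (∀ p, |F p| ≤ (1 + |m|) * ‖p‖ + |β|) := by
    rcases hdich with hpos | hneg
    · exact ⟨f, hpos, hfcont, fun n => by rw [hfrec n, hfL0 n]; ring, habs⟩
    · refine ⟨fun p => -f p, fun p hp => by simpa using hneg p hp, hfcont.neg,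
        fun n => ?_, fun p => by simpa using habs p⟩
      simp only
      rw [hfrec n, hfL0 n]
      ring
  -- minimum of F on E
  obtain ⟨p₁, hp₁E, hp₁min'⟩ := hEcomp.exists_isMinOn hEne hFcont.continuousOn
  have hp₁min : ∀ q ∈ E, F p₁ ≤ F q := fun q hq => hp₁min' hq
  set ε := F p₁ with hε
  have hεpos : 0 < ε := hFpos p₁ hp₁E
  have hind : ∀ n : ℕ, F (x n) ≤ F (x 0) - n * ε := by
    intro n
    induction n with
    | zero => simp
    | succ k ih =>
      have hstep : ε ≤ F (a k) := hp₁min (a k) (haE k)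
      rw [hFrec k]
      push_cast
      linarith
  have hmpos : (0:ℝ) < 1 + |m| := by positivity
  have hlow : ∀ n : ℕ, ((n : ℝ) * ε - F (x 0) - |β|) / (1 + |m|) ≤ ‖x n‖ := by
    intro n
    rw [div_le_iff₀ hmpos]
    have h1 := hind n
    have h2 := hFabs (x n)
    have h3 : -F (x n) ≤ |F (x n)| := neg_le_abs _
    nlinarith
  refine ⟨part1, part2, tendsto_atTop_mono hlow ?_⟩
  apply Tendsto.atTop_div_const hmpos
  simp only [sub_eq_add_neg]
  exact tendsto_atTop_add_const_right _ _ (tendsto_atTop_add_const_right _ _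
    (tendsto_natCast_atTop_atTop.atTop_mul_const hεpos))
end

section
/- In the Euclidean plane ℝ², let p ≥ 1, let S_p = {(x,y) : |x|^p + |y|^p = 1} be the p-sphere (the unit sphere of the ℓ_p norm on ℝ²), and let L = {(x,y) : y = mx + β} be a line with S_p ∩ L = ∅. Let (x_n) be a Douglas–Rachford sequence for the pair (S_p, L): x_{n+1} = x_n + (b_n − a_n) where a_n ∈ S_p is a nearest point of S_p to x_n and b_n ∈ L is the nearest point of L to 2a_n − x_n. Then ‖x_{n+1} − x_n‖ ≥ d(S_p, L) > 0 for all n, and ‖x_n‖ → ∞; i.e., the iterates tend to infinity linearly with step size at least d(S_p, L). -/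
open Metric Filter

private lemma abs_coord_le_norm' (z : EuclideanSpace ℝ (Fin 2)) (i : Fin 2) :
    |z i| ≤ ‖z‖ := by
  rw [EuclideanSpace.norm_eq, ← Real.sqrt_sq_eq_abs]
  apply Real.sqrt_le_sqrt
  fin_cases i <;>
    simp [Fin.sum_univ_two, Real.norm_eq_abs, sq_abs] <;>
    nlinarith [sq_nonneg (z 0), sq_nonneg (z 1)]

set_option maxHeartbeats 1600000 in
/-- For a disjoint `p`-sphere `S_p` (`p ≥ 1`) and line `L` in the Euclidean
plane, the Douglas–Rachford iterates with nearest-point selections satisfy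
`‖x_{n+1} − x_n‖ ≥ d(S_p, L) > 0` and `‖x n‖ → ∞`. -/
theorem douglasRachford_pSphere_line_infeasible
    (p m β : ℝ) (hp : 1 ≤ p)
    (S L : Set (EuclideanSpace ℝ (Fin 2)))
    (hS : S = {q : EuclideanSpace ℝ (Fin 2) | |q 0| ^ p + |q 1| ^ p = 1})
    (hL : L = {q : EuclideanSpace ℝ (Fin 2) | q 1 = m * q 0 + β})
    (hdisj : S ∩ L = ∅)
    (x a c : ℕ → EuclideanSpace ℝ (Fin 2))
    (haS : ∀ n, a n ∈ S) (hanear : ∀ n, ‖x n - a n‖ = infDist (x n) S)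
    (hcL : ∀ n, c n ∈ L)
    (hcnear : ∀ n, ‖(2 • a n - x n) - c n‖ = infDist (2 • a n - x n) L)
    (hrec : ∀ n : ℕ, x (n + 1) = x n + (c n - a n)) :
    (∀ n : ℕ, sInf {d : ℝ | ∃ q ∈ S, ∃ r ∈ L, d = ‖q - r‖} ≤ ‖x (n + 1) - x n‖) ∧
      0 < sInf {d : ℝ | ∃ q ∈ S, ∃ r ∈ L, d = ‖q - r‖} ∧
      Tendsto (fun n : ℕ => ‖x n‖) atTop atTop := by
  have hp0 : (0:ℝ) < p := lt_of_lt_of_le one_pos hp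
  have hp0' : p ≠ 0 := ne_of_gt hp0
  -- points on the line
  set pt : ℝ → EuclideanSpace ℝ (Fin 2) :=
    fun t => (WithLp.equiv 2 (Fin 2 → ℝ)).symm ![t, m * t + β] with hpt
  have hpt0 : ∀ t, pt t 0 = t := by intro t; simp [hpt]
  have hpt1 : ∀ t, pt t 1 = m * t + β := by intro t; simp [hpt]
  have hptL : ∀ t, pt t ∈ L := by
    intro t; rw [hL]; simp only [Set.mem_setOf_eq, hpt0, hpt1]
  have hA0 : ∀ t : ℝ, |t| ^ p + |m * t + β| ^ p ≠ 1 := by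
    intro t h
    have hmem : pt t ∈ S ∩ L := by
      refine ⟨?_, hptL t⟩
      rw [hS]; simp only [Set.mem_setOf_eq, hpt0, hpt1]; exact h
    rw [hdisj] at hmem; exact hmem
  have hcont : Continuous fun t : ℝ => |t| ^ p + |m * t + β| ^ p := by
    apply Continuous.add <;>
    · apply Continuous.rpow_const
      · continuity
      · intro _; right; exact le_of_lt hp0
  have hA : ∀ t : ℝ, 1 < |t| ^ p + |m * t + β| ^ p := by
    intro t
    by_contra hle
    push_neg at hle
    have hlt : |t| ^ p + |m * t + β| ^ p < 1 := lt_of_le_of_ne hle (hA0 t)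
    set T := |t| + 2 with hT
    have hT1 : (1:ℝ) ≤ T := by have := abs_nonneg t; simp only [hT]; linarith
    have hTval : (1:ℝ) < |T| ^ p + |m * T + β| ^ p := by
      have h1 : T ≤ T ^ p := by
        calc T = T ^ (1:ℝ) := (Real.rpow_one T).symm
        _ ≤ T ^ p := Real.rpow_le_rpow_of_exponent_le hT1 hp
      have h2 : |T| = T := abs_of_nonneg (by linarith)
      have h3 : (0:ℝ) ≤ |m * T + β| ^ p := Real.rpow_nonneg (abs_nonneg _) p
      rw [h2]
      have := abs_nonneg t
      nlinarith
    have hord : t ≤ T := le_trans (le_abs_self t) (by simp only [hT]; linarith)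
    have hsub := intermediate_value_Icc hord hcont.continuousOn
    have h1mem : (1:ℝ) ∈ Set.Icc (|t| ^ p + |m * t + β| ^ p) (|T| ^ p + |m * T + β| ^ p) :=
      ⟨le_of_lt hlt, le_of_lt hTval⟩
    obtain ⟨s, _, hs⟩ := hsub h1mem
    exact hA0 s hs
  have hle1 : ∀ y : ℝ, 0 ≤ y → y ^ p ≤ 1 → y ≤ 1 := by
    intro y hy hyp
    by_contra hgt
    push_neg at hgt
    have := (Real.one_lt_rpow_iff_of_pos (by linarith)).mpr (Or.inl ⟨hgt, hp0⟩)
    linarith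
  have hcoord : ∀ q ∈ S, |q 0| ≤ 1 ∧ |q 1| ≤ 1 := by
    intro q hq
    rw [hS] at hq
    simp only [Set.mem_setOf_eq] at hq
    have h0 : (0:ℝ) ≤ |q 0| ^ p := Real.rpow_nonneg (abs_nonneg _) p
    have h1 : (0:ℝ) ≤ |q 1| ^ p := Real.rpow_nonneg (abs_nonneg _) p
    exact ⟨hle1 _ (abs_nonneg _) (by linarith), hle1 _ (abs_nonneg _) (by linarith)⟩
  have hB : ∀ q ∈ S, |q 1| < |m * q 0 + β| := by
    intro q hq
    have hq' : |q 0| ^ p + |q 1| ^ p = 1 := by rw [hS] at hq; exact hq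
    by_contra hle
    push_neg at hle
    have : |m * q 0 + β| ^ p ≤ |q 1| ^ p :=
      Real.rpow_le_rpow (abs_nonneg _) hle (le_of_lt hp0)
    linarith [hA (q 0)]
  -- sign dichotomy
  have hgpos_or : (∀ q ∈ S, 0 < m * q 0 + β) ∨ (∀ q ∈ S, m * q 0 + β < 0) := by
    by_contra hcon
    push_neg at hcon
    obtain ⟨⟨q, hqS, hq⟩, ⟨q', hq'S, hq'⟩⟩ := hcon
    have hne : m * q 0 + β ≠ 0 := by
      intro h
      have := hB q hqS
      rw [h, abs_zero] at this
      linarith [abs_nonneg (q 1)]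
    have hgq : m * q 0 + β < 0 := lt_of_le_of_ne hq hne
    have hgc : Continuous fun t : ℝ => m * t + β := by continuity
    have hivt := intermediate_value_uIcc (a := q 0) (b := q' 0)
      (f := fun t : ℝ => m * t + β) hgc.continuousOn
    have h0mem : (0:ℝ) ∈ Set.uIcc (m * q 0 + β) (m * q' 0 + β) :=
      Set.mem_uIcc.mpr (Or.inl ⟨le_of_lt hgq, hq'⟩)
    obtain ⟨t, ht, hgt⟩ := hivt h0mem
    have hq0 := (hcoord q hqS).1
    have hq'0 := (hcoord q' hq'S).1
    have ht1 : |t| ≤ 1 := by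
      rw [abs_le] at hq0 hq'0 ⊢
      rcases Set.mem_uIcc.mp ht with ⟨h1, h2⟩ | ⟨h1, h2⟩ <;>
        exact ⟨by linarith [hq0.1, hq'0.1], by linarith [hq0.2, hq'0.2]⟩
    have h1 : |t| ^ p ≤ 1 := Real.rpow_le_one (abs_nonneg t) ht1 (le_of_lt hp0)
    have hgt' : m * t + β = 0 := hgt
    have h2 := hA t
    rw [hgt', abs_zero, Real.zero_rpow hp0'] at h2
    linarith
  set F : EuclideanSpace ℝ (Fin 2) → ℝ := fun q => m * q 0 - q 1 + β with hF
  obtain ⟨σ, hσabs, hσf⟩ : ∃ σ : ℝ, |σ| = 1 ∧ ∀ q ∈ S, 0 < σ * F q := by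
    obtain hpos | hneg := hgpos_or
    · refine ⟨1, abs_one, fun q hq => ?_⟩
      have h1 := hB q hq
      have h2 := hpos q hq
      rw [abs_of_pos h2] at h1
      have h3 : q 1 ≤ |q 1| := le_abs_self _
      simp only [hF, one_mul]
      linarith
    · refine ⟨-1, by norm_num, fun q hq => ?_⟩
      have h1 := hB q hq
      have h2 := hneg q hq
      rw [abs_of_neg h2] at h1
      have h3 : -q 1 ≤ |q 1| := neg_le_abs _
      simp only [hF]
      nlinarith
  -- continuity of F
  have hcoordCont : ∀ i : Fin 2, Continuous fun q : EuclideanSpace ℝ (Fin 2) => q i :=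
    fun i => (EuclideanSpace.proj i : EuclideanSpace ℝ (Fin 2) →L[ℝ] ℝ).continuous
  have hFcont : Continuous F := by
    simp only [hF]
    exact ((continuous_const.mul (hcoordCont 0)).sub (hcoordCont 1)).add continuous_const
  -- compactness of S
  have hSclosed : IsClosed S := by
    rw [hS]
    have hc : Continuous fun q : EuclideanSpace ℝ (Fin 2) => |q 0| ^ p + |q 1| ^ p := by
      apply Continuous.add <;>
      · apply Continuous.rpow_const
        · exact (hcoordCont _).abs
        · intro _; right; exact le_of_lt hp0
    exact isClosed_eq hc continuous_const
  have hSbdd : Bornology.IsBounded S := by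
    apply (Metric.isBounded_closedBall (x := (0 : EuclideanSpace ℝ (Fin 2))) (r := 2)).subset
    intro q hq
    obtain ⟨h0, h1⟩ := hcoord q hq
    simp only [Metric.mem_closedBall, dist_zero_right]
    rw [EuclideanSpace.norm_eq]
    have h2 : Real.sqrt (∑ i : Fin 2, ‖q i‖ ^ 2) ≤ Real.sqrt 4 := by
      apply Real.sqrt_le_sqrt
      rw [Fin.sum_univ_two, Real.norm_eq_abs, Real.norm_eq_abs]
      nlinarith [abs_nonneg (q 0), abs_nonneg (q 1)]
    have h3 : Real.sqrt 4 = 2 := by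
      rw [show (4:ℝ) = 2 ^ 2 by norm_num, Real.sqrt_sq (by norm_num : (0:ℝ) ≤ 2)]
    linarith
  have hScompact : IsCompact S := Metric.isCompact_of_isClosed_isBounded hSclosed hSbdd
  have hSne : S.Nonempty := by
    refine ⟨(WithLp.equiv 2 (Fin 2 → ℝ)).symm ![0, 1], ?_⟩
    rw [hS]
    simp [Real.zero_rpow hp0', Real.one_rpow]
  obtain ⟨q₀, hq₀S, hq₀min'⟩ :=
    hScompact.exists_isMinOn hSne (continuous_const.mul hFcont).continuousOn
  have hq₀min : ∀ q ∈ S, σ * F q₀ ≤ σ * F q := fun q hq => hq₀min' hq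
  set δ : ℝ := σ * F q₀ with hδ
  have hδpos : 0 < δ := hσf q₀ hq₀S
  have hFlip : ∀ z : EuclideanSpace ℝ (Fin 2), |m * z 0 - z 1| ≤ (|m| + 1) * ‖z‖ := by
    intro z
    have h0 := abs_coord_le_norm' z 0
    have h1 := abs_coord_le_norm' z 1
    have h2 : |m * z 0 - z 1| ≤ |m * z 0| + |z 1| := by
      rw [sub_eq_add_neg]
      exact (abs_add_le _ _).trans (by rw [abs_neg])
    rw [abs_mul] at h2
    have hm := abs_nonneg m
    nlinarith
  have hFL : ∀ r ∈ L, F r = 0 := by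
    intro r hr
    rw [hL] at hr
    simp only [Set.mem_setOf_eq] at hr
    simp only [hF, hr]
    ring
  set Tset : Set ℝ := {d : ℝ | ∃ q ∈ S, ∃ r ∈ L, d = ‖q - r‖} with hTset
  have hTne : Tset.Nonempty := ⟨‖a 0 - c 0‖, a 0, haS 0, c 0, hcL 0, rfl⟩
  have hFdiff : ∀ q r : EuclideanSpace ℝ (Fin 2), |F q - F r| ≤ (|m| + 1) * ‖q - r‖ := by
    intro q r
    have h := hFlip (q - r)
    have hs0 : (q - r) 0 = q 0 - r 0 := rfl
    have hs1 : (q - r) 1 = q 1 - r 1 := rfl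
    rw [hs0, hs1] at h
    calc |F q - F r| = |m * (q 0 - r 0) - (q 1 - r 1)| := by
          simp only [hF]; ring_nf
      _ ≤ (|m| + 1) * ‖q - r‖ := h
  have hTlb : ∀ d ∈ Tset, δ / (|m| + 1) ≤ d := by
    rintro d ⟨q, hqS, r, hrL, rfl⟩
    have h1 : δ ≤ σ * F q := hq₀min q hqS
    have h2 := hFdiff q r
    rw [hFL r hrL, sub_zero] at h2
    have h3 : δ ≤ |F q| := by
      have h4 : σ * F q ≤ |σ * F q| := le_abs_self _
      rw [abs_mul, hσabs, one_mul] at h4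
      linarith
    rw [div_le_iff₀ (by positivity : (0:ℝ) < |m| + 1)]
    calc δ ≤ |F q| := h3
      _ ≤ (|m| + 1) * ‖q - r‖ := h2
      _ = ‖q - r‖ * (|m| + 1) := mul_comm _ _
  have hbdd : BddBelow Tset := ⟨δ / (|m| + 1), hTlb⟩
  have hDpos : 0 < sInf Tset :=
    lt_of_lt_of_le (by positivity) (le_csInf hTne hTlb)
  have hfirst : ∀ n : ℕ, sInf Tset ≤ ‖x (n + 1) - x n‖ := by
    intro n
    have hn : x (n + 1) - x n = c n - a n := by rw [hrec n]; abel
    rw [hn, norm_sub_rev]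
    exact csInf_le hbdd ⟨a n, haS n, c n, hcL n, rfl⟩
  have hFstep : ∀ n, F (x (n + 1)) = F (x n) - F (a n) := by
    intro n
    have h0 : x (n + 1) 0 = x n 0 + (c n 0 - a n 0) := by rw [hrec n]; rfl
    have h1 : x (n + 1) 1 = x n 1 + (c n 1 - a n 1) := by rw [hrec n]; rfl
    have hc := hFL (c n) (hcL n)
    simp only [hF] at hc ⊢
    rw [h0, h1]
    linear_combination hc
  have hmain : ∀ n : ℕ, σ * F (x n) ≤ σ * F (x 0) - n * δ := by
    intro n
    induction n with
    | zero => simp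
    | succ k ih =>
      have h1 : σ * F (x (k + 1)) = σ * F (x k) - σ * F (a k) := by
        rw [hFstep k]; ring
      have h2 : δ ≤ σ * F (a k) := hq₀min (a k) (haS k)
      push_cast
      rw [h1]
      push_cast at ih
      linarith
  have hlow : ∀ n : ℕ, ((n : ℝ) * δ - σ * F (x 0) - |β|) / (|m| + 1) ≤ ‖x n‖ := by
    intro n
    have h1 : |F (x n) - β| ≤ (|m| + 1) * ‖x n‖ := by
      have h := hFlip (x n)
      calc |F (x n) - β| = |m * x n 0 - x n 1| := by
            simp only [hF]; ring_nf
        _ ≤ (|m| + 1) * ‖x n‖ := h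
    have h2 := hmain n
    have h3 : -(σ * F (x n)) ≤ |F (x n)| := by
      calc -(σ * F (x n)) ≤ |σ * F (x n)| := neg_le_abs _
        _ = |F (x n)| := by rw [abs_mul, hσabs, one_mul]
    have h4 : |F (x n)| ≤ |F (x n) - β| + |β| := by
      calc |F (x n)| = |F (x n) - β + β| := by ring_nf
        _ ≤ |F (x n) - β| + |β| := abs_add_le _ _
    rw [div_le_iff₀ (by positivity : (0:ℝ) < |m| + 1)]
    linarith
  have htend : Tendsto (fun n : ℕ => ‖x n‖) atTop atTop := by
    apply tendsto_atTop_mono hlow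
    apply Tendsto.atTop_div_const (by positivity : (0:ℝ) < |m| + 1)
    have h1 : Tendsto (fun n : ℕ => (n : ℝ) * δ) atTop atTop :=
      tendsto_natCast_atTop_atTop.atTop_mul_const hδpos
    have h2 := tendsto_atTop_add_const_right atTop (-(σ * F (x 0)) - |β|) h1
    exact h2.congr fun n => by ring
  exact ⟨hfirst, hDpos, htend⟩
end

section
/- Let U and V be nonempty closed convex subsets of a real Hilbert space H, with boundaries A = frontier U and B = frontier V. Let x ∈ H satisfy x ∉ U and 2P_U x − x ∉ V. Then: (i) the unique nearest point of x in A is P_U x; (ii) the unique nearest point of 2P_U x − x in B is P_V(2P_U x − x); and consequently (iii) the Douglas–Rachford step for the boundaries agrees with the convex Douglas–Rachford step: (1/2)(x + R_B R_A x) = (1/2)(x + R_V R_U x) = T_{U,V} x, where R_A x = 2P_U x − x and R_B y = 2P_V y − y are computed using these nearest-point selections. -/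
open Metric

lemma proj_frontier_aux
    {H : Type*} [NormedAddCommGroup H] [InnerProductSpace ℝ H]
    (U : Set H) (hUcl : IsClosed U) (hUconv : Convex ℝ U)
    (P : H → H) (hP : ∀ z : H, P z ∈ U ∧ ∀ y ∈ U, dist z (P z) ≤ dist z y)
    (x : H) (hx : x ∉ U) :
    P x ∈ frontier U ∧ ‖x - P x‖ = infDist x (frontier U) ∧
      ∀ y ∈ frontier U, ‖x - y‖ = infDist x (frontier U) → y = P x := by
  obtain ⟨hPmem, hPmin⟩ := hP x
  have hdpos : 0 < dist x (P x) := by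
    rw [dist_pos]; intro h; exact hx (h ▸ hPmem)
  -- not interior
  have hnotint : P x ∉ interior U := by
    intro hint
    obtain ⟨ε, hε, hball⟩ := Metric.isOpen_iff.1 isOpen_interior (P x) hint
    set t : ℝ := min (1/2) (ε / (2 * dist x (P x))) with ht
    have htpos : 0 < t := lt_min (by norm_num) (div_pos hε (by positivity))
    have htlt : t < 1 := lt_of_le_of_lt (min_le_left _ _) (by norm_num)
    set q : H := P x + t • (x - P x) with hq
    have hqball : q ∈ Metric.ball (P x) ε := by
      rw [Metric.mem_ball, dist_eq_norm, hq]
      simp only [add_sub_cancel_left]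
      rw [norm_smul, Real.norm_eq_abs, abs_of_pos htpos]
      have : t ≤ ε / (2 * dist x (P x)) := min_le_right _ _
      have h2 : ‖x - P x‖ = dist x (P x) := (dist_eq_norm x (P x)).symm
      rw [h2]
      calc t * dist x (P x) ≤ (ε / (2 * dist x (P x))) * dist x (P x) := by
            exact mul_le_mul_of_nonneg_right this dist_nonneg
        _ = ε / 2 := by field_simp
        _ < ε := by linarith
    have hqU : q ∈ U := interior_subset (hball hqball)
    have : dist x (P x) ≤ dist x q := hPmin q hqU
    have hdq : dist x q = (1 - t) * dist x (P x) := by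
      rw [dist_eq_norm, hq, dist_eq_norm]
      have : x - (P x + t • (x - P x)) = (1 - t) • (x - P x) := by
        rw [sub_smul, one_smul]; abel
      rw [this, norm_smul, Real.norm_eq_abs, abs_of_pos (by linarith)]
    nlinarith
  have hfront : P x ∈ frontier U := by
    rw [hUcl.frontier_eq]; exact ⟨hPmem, hnotint⟩
  have hsub : frontier U ⊆ U := by
    rw [hUcl.frontier_eq]; exact Set.diff_subset
  have hinf : ‖x - P x‖ = infDist x (frontier U) := by
    apply le_antisymm
    · rw [← dist_eq_norm]
      by_contra h
      push_neg at h
      obtain ⟨y, hy, hlt⟩ := (infDist_lt_iff ⟨P x, hfront⟩).1 h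
      exact absurd (hPmin y (hsub hy)) (not_le.2 hlt)
    · rw [← dist_eq_norm]
      exact infDist_le_dist_of_mem hfront
  refine ⟨hfront, hinf, fun y hy hyd => ?_⟩
  have hyU : y ∈ U := hsub hy
  have hyeq : ‖x - y‖ = ‖x - P x‖ := by rw [hyd, hinf]
  -- midpoint argument
  set m : H := (1/2 : ℝ) • y + (1/2 : ℝ) • P x with hm
  have hmU : m ∈ U := hUconv hyU hPmem (by norm_num) (by norm_num) (by norm_num)
  have hdm : dist x (P x) ≤ dist x m := hPmin m hmU
  have hxm : x - m = (1/2 : ℝ) • ((x - y) + (x - P x)) := by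
    rw [hm, smul_add]; module
  have hnm : dist x m = (1/2 : ℝ) * ‖(x - y) + (x - P x)‖ := by
    rw [dist_eq_norm, hxm, norm_smul, Real.norm_eq_abs]; norm_num
  have hpar := parallelogram_law_with_norm ℝ (x - y) (x - P x)
  have hsubnorm : ‖(x - y) - (x - P x)‖ = 0 := by
    have h1 : ‖x - P x‖ = dist x (P x) := (dist_eq_norm x (P x)).symm
    nlinarith [norm_nonneg ((x - y) - (x - P x)), norm_nonneg ((x - y) + (x - P x))]
  have : (x - y) - (x - P x) = 0 := norm_eq_zero.1 hsubnorm
  have : y = P x := by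
    have h := this; rw [sub_sub_sub_cancel_left] at h
    exact sub_eq_zero.1 h |>.symm
  exact this


/-- For nonempty closed convex sets `U, V` with metric projections `PU, PV`,
if `x ∉ U` and `2 PU x − x ∉ V`, then (i) `PU x` is the unique nearest point of `x` in
`frontier U`; (ii) `PV (2 PU x − x)` is the unique nearest point of `2 PU x − x` in
`frontier V`; and (iii) the Douglas–Rachford step for the boundaries (with any
nearest-point selections) agrees with the convex Douglas–Rachford step `T_{U,V} x`. -/
theorem douglasRachford_boundary_step_eq_convex_step
    {H : Type*} [NormedAddCommGroup H] [InnerProductSpace ℝ H] [CompleteSpace H]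
    (U V : Set H)
    (hUne : U.Nonempty) (hUcl : IsClosed U) (hUconv : Convex ℝ U)
    (hVne : V.Nonempty) (hVcl : IsClosed V) (hVconv : Convex ℝ V)
    (PU PV : H → H)
    (hPU : ∀ z : H, PU z ∈ U ∧ ∀ y ∈ U, dist z (PU z) ≤ dist z y)
    (hPV : ∀ z : H, PV z ∈ V ∧ ∀ y ∈ V, dist z (PV z) ≤ dist z y)
    (x : H) (hxU : x ∉ U) (hxV : 2 • PU x - x ∉ V) :
    (PU x ∈ frontier U ∧ ‖x - PU x‖ = infDist x (frontier U) ∧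
      ∀ y ∈ frontier U, ‖x - y‖ = infDist x (frontier U) → y = PU x) ∧
    (PV (2 • PU x - x) ∈ frontier V ∧
      ‖(2 • PU x - x) - PV (2 • PU x - x)‖ = infDist (2 • PU x - x) (frontier V) ∧
      ∀ y ∈ frontier V, ‖(2 • PU x - x) - y‖ = infDist (2 • PU x - x) (frontier V) →
        y = PV (2 • PU x - x)) ∧
    (∀ a ∈ frontier U, ‖x - a‖ = infDist x (frontier U) →
      ∀ c ∈ frontier V, ‖(2 • a - x) - c‖ = infDist (2 • a - x) (frontier V) →
        (1 / 2 : ℝ) • (x + (2 • c - (2 • a - x))) =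
          (1 / 2 : ℝ) • (x + (2 • PV (2 • PU x - x) - (2 • PU x - x)))) := by

  obtain ⟨hUf, hUd, hUu⟩ := proj_frontier_aux U hUcl hUconv PU hPU x hxU
  obtain ⟨hVf, hVd, hVu⟩ := proj_frontier_aux V hVcl hVconv PV hPV (2 • PU x - x) hxV
  refine ⟨⟨hUf, hUd, hUu⟩, ⟨hVf, hVd, hVu⟩, ?_⟩
  intro a ha hda c hc hdc
  have haeq : a = PU x := hUu a ha hda
  subst haeq
  have hceq : c = PV (2 • PU x - x) := hVu c hc hdc
  rw [hceq]
end

section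
/- Let M and N be closed linear subspaces of a real Hilbert space H and define the twisted Douglas–Rachford operator V := P_M ∘ P_N + P_{N⊥} ∘ P_{M⊥}. Then for every integer n ≥ 1, V^n = (P_M ∘ P_N)^n + (P_{N⊥} ∘ P_{M⊥})^n; consequently, the iterates x_n = V^n(x_0) decompose as x_n = u_n + v_n where u_n = (P_M P_N)^n x_0 satisfies u_{n+1} = P_M P_N u_n and v_n = (P_{N⊥} P_{M⊥})^n x_0 satisfies v_{n+1} = P_{N⊥} P_{M⊥} v_n. -/
/-- For closed linear subspaces `M, N` of a real Hilbert space, the twisted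
Douglas–Rachford operator `V = P_M ∘ P_N + P_{N⊥} ∘ P_{M⊥}` satisfies, for every `n ≥ 1`,
`V^n = (P_M P_N)^n + (P_{N⊥} P_{M⊥})^n`; consequently the iterates `x_n = V^n x_0`
decompose as `x_n = u_n + v_n` with `u_{n+1} = P_M P_N u_n` and
`v_{n+1} = P_{N⊥} P_{M⊥} v_n`. -/
theorem twisted_douglasRachford_iterates_decompose
    {H : Type*} [NormedAddCommGroup H] [InnerProductSpace ℝ H] [CompleteSpace H]
    (M N : Submodule ℝ H) [Submodule.HasOrthogonalProjection M] [Submodule.HasOrthogonalProjection N]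
    (V : H → H)
    (hV : ∀ x : H, V x = (Submodule.orthogonalProjectionOnto M ((Submodule.orthogonalProjectionOnto N x : H)) : H) +
        (Submodule.orthogonalProjectionOnto Nᗮ ((Submodule.orthogonalProjectionOnto Mᗮ x : H)) : H)) :
    (∀ x₀ : H, ∀ n : ℕ, 1 ≤ n →
      V^[n] x₀ = (fun y : H => (Submodule.orthogonalProjectionOnto M ((Submodule.orthogonalProjectionOnto N y : H)) : H))^[n] x₀
        + (fun y : H => (Submodule.orthogonalProjectionOnto Nᗮ ((Submodule.orthogonalProjectionOnto Mᗮ y : H)) : H))^[n] x₀) ∧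
    (∀ x₀ : H, ∀ n : ℕ,
      (fun y : H => (Submodule.orthogonalProjectionOnto M ((Submodule.orthogonalProjectionOnto N y : H)) : H))^[n + 1] x₀ =
        (Submodule.orthogonalProjectionOnto M ((Submodule.orthogonalProjectionOnto N
          ((fun y : H => (Submodule.orthogonalProjectionOnto M ((Submodule.orthogonalProjectionOnto N y : H)) : H))^[n] x₀) : H)) : H)) ∧
    (∀ x₀ : H, ∀ n : ℕ,
      (fun y : H => (Submodule.orthogonalProjectionOnto Nᗮ ((Submodule.orthogonalProjectionOnto Mᗮ y : H)) : H))^[n + 1] x₀ =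
        (Submodule.orthogonalProjectionOnto Nᗮ ((Submodule.orthogonalProjectionOnto Mᗮ
          ((fun y : H => (Submodule.orthogonalProjectionOnto Nᗮ ((Submodule.orthogonalProjectionOnto Mᗮ y : H)) : H))^[n] x₀) : H)) : H)) := by
  set A : H → H := fun y : H => (Submodule.orthogonalProjectionOnto M ((Submodule.orthogonalProjectionOnto N y : H)) : H)
    with hA
  set B : H → H := fun y : H => (Submodule.orthogonalProjectionOnto Nᗮ ((Submodule.orthogonalProjectionOnto Mᗮ y : H)) : H)
    with hB
  -- A kills elements of Nᗮ, B kills elements of M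
  have hAB : ∀ x : H, x ∈ Nᗮ → A x = 0 := by
    intro x hx
    simp only [hA, Submodule.orthogonalProjectionOnto_apply_of_mem_orthogonal hx,
      Submodule.coe_zero, map_zero]
  have hBA : ∀ x : H, x ∈ M → B x = 0 := by
    intro x hx
    simp only [hB, Submodule.orthogonalProjectionOnto_orthogonal_apply_eq_zero hx,
      Submodule.coe_zero, map_zero]
  have hAmem : ∀ x : H, A x ∈ M := fun x => (Submodule.orthogonalProjectionOnto M _).2
  have hBmem : ∀ x : H, B x ∈ Nᗮ := fun x => (Submodule.orthogonalProjectionOnto Nᗮ _).2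
  refine ⟨?_, ?_, ?_⟩
  · intro x₀ n hn
    induction n with
    | zero => omega
    | succ k ih =>
      rcases Nat.eq_zero_or_pos k with hk | hk
      · subst hk
        simp [hV x₀, hA, hB]
      · have ih' := ih hk
        rw [Function.iterate_succ_apply', ih', hV,
          Function.iterate_succ_apply' A, Function.iterate_succ_apply' B]
        have hAm : A^[k] x₀ ∈ M := by
          obtain ⟨m, hm⟩ := Nat.exists_eq_succ_of_ne_zero (Nat.pos_iff_ne_zero.mp hk)
          rw [hm, Function.iterate_succ_apply']
          exact hAmem _
        have hBm : B^[k] x₀ ∈ Nᗮ := by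
          obtain ⟨m, hm⟩ := Nat.exists_eq_succ_of_ne_zero (Nat.pos_iff_ne_zero.mp hk)
          rw [hm, Function.iterate_succ_apply']
          exact hBmem _
        have h1 : (Submodule.orthogonalProjectionOnto M ((Submodule.orthogonalProjectionOnto N (A^[k] x₀ + B^[k] x₀) : H)) : H)
            = A (A^[k] x₀) := by
          simp only [hA]
          rw [map_add, Submodule.orthogonalProjectionOnto_apply_of_mem_orthogonal hBm,
            add_zero]
        have h2 : (Submodule.orthogonalProjectionOnto Nᗮ ((Submodule.orthogonalProjectionOnto Mᗮ (A^[k] x₀ + B^[k] x₀) : H)) : H)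
            = B (B^[k] x₀) := by
          simp only [hB]
          rw [map_add, Submodule.orthogonalProjectionOnto_orthogonal_apply_eq_zero hAm,
            zero_add]
        rw [h1, h2]
  · intro x₀ n
    rw [Function.iterate_succ_apply']
  · intro x₀ n
    rw [Function.iterate_succ_apply']
end

section
/- Let L₁ and L₂ be one-dimensional linear subspaces of the Euclidean plane ℝ², spanned by unit vectors u and w respectively. Let T = (1/2)(I + R_{L₂} R_{L₁}) be the Douglas–Rachford operator, where R_{L_i} = 2P_{L_i} − I and P_{L_i} is the orthogonal projection onto L_i. Then for every x ∈ ℝ², ‖T x‖ = |⟨u, w⟩| · ‖x‖. In particular, if L₁ ≠ L₂ then |⟨u, w⟩| < 1 and T^n x → 0 as n → ∞ for every x ∈ ℝ², at a linear (exponential) rate. -/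
open Filter

/-- For one-dimensional subspaces `L₁ = span{u}`, `L₂ = span{w}` of the
Euclidean plane spanned by unit vectors `u, w`, the Douglas–Rachford operator
`T = (1/2)(I + R_{L₂} R_{L₁})` satisfies `‖T x‖ = |⟨u,w⟩| ‖x‖` for all `x`; in particular,
if `L₁ ≠ L₂` then `|⟨u,w⟩| < 1`, `‖Tⁿ x‖ = |⟨u,w⟩|ⁿ ‖x‖`, and `Tⁿ x → 0` for every `x`. -/
theorem douglasRachford_two_lines_through_origin
    (u w : EuclideanSpace ℝ (Fin 2)) (hu : ‖u‖ = 1) (hw : ‖w‖ = 1)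
    (L₁ L₂ : Submodule ℝ (EuclideanSpace ℝ (Fin 2)))
    (hL₁ : L₁ = Submodule.span ℝ {u}) (hL₂ : L₂ = Submodule.span ℝ {w})
    (T : EuclideanSpace ℝ (Fin 2) → EuclideanSpace ℝ (Fin 2))
    (hT : ∀ x, T x = (1 / 2 : ℝ) • (x +
      (2 • ((Submodule.orthogonalProjectionOnto L₂
          (2 • ((Submodule.orthogonalProjectionOnto L₁ x : EuclideanSpace ℝ (Fin 2))) - x) :
            EuclideanSpace ℝ (Fin 2)))
        - (2 • ((Submodule.orthogonalProjectionOnto L₁ x : EuclideanSpace ℝ (Fin 2))) - x)))) :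
    (∀ x, ‖T x‖ = |(inner ℝ u w : ℝ)| * ‖x‖) ∧
      (L₁ ≠ L₂ →
        |(inner ℝ u w : ℝ)| < 1 ∧
        (∀ x, ∀ n : ℕ, ‖T^[n] x‖ = |(inner ℝ u w : ℝ)| ^ n * ‖x‖) ∧
        ∀ x, Tendsto (fun n : ℕ => T^[n] x) atTop (nhds 0)) := by
  have hkey : ∀ x, T x = x - (inner ℝ u x : ℝ) • u
      + (2 * (inner ℝ u x : ℝ) * (inner ℝ w u : ℝ) - (inner ℝ w x : ℝ)) • w := by
    intro x
    have hP1 : (Submodule.orthogonalProjectionOnto L₁ x : EuclideanSpace ℝ (Fin 2)) = (inner ℝ u x : ℝ) • u := by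
      rw [hL₁]; exact Submodule.starProjection_unit_singleton ℝ hu x
    rw [hT, hP1, hL₂, ← Submodule.starProjection_apply, Submodule.starProjection_unit_singleton ℝ hw]
    simp only [two_smul, inner_add_right, inner_sub_right, real_inner_smul_right]
    module
  have hu2 : u 0 ^ 2 + u 1 ^ 2 = 1 := by
    have := real_inner_self_eq_norm_sq u
    rw [hu, PiLp.inner_apply] at this
    simpa [PiLp.inner_apply, Fin.sum_univ_two, RCLike.inner_apply, sq] using this
  have hw2 : w 0 ^ 2 + w 1 ^ 2 = 1 := by
    have := real_inner_self_eq_norm_sq w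
    rw [hw, PiLp.inner_apply] at this
    simpa [PiLp.inner_apply, Fin.sum_univ_two, RCLike.inner_apply, sq] using this
  have hnorm : ∀ x, ‖T x‖ = |(inner ℝ u w : ℝ)| * ‖x‖ := by
    intro x
    have hsq : ‖T x‖ ^ 2 = (|(inner ℝ u w : ℝ)| * ‖x‖) ^ 2 := by
      rw [hkey x]
      rw [← real_inner_self_eq_norm_sq]
      rw [mul_pow, sq_abs, ← real_inner_self_eq_norm_sq]
      simp only [inner_add_left, inner_add_right, inner_sub_left, inner_sub_right,
        real_inner_smul_left, real_inner_smul_right,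
        PiLp.inner_apply, Fin.sum_univ_two, RCLike.inner_apply, conj_trivial,
        PiLp.smul_apply, PiLp.add_apply, PiLp.sub_apply, smul_eq_mul, map_one]
      linear_combination
        (((u 0 * x 0 + u 1 * x 1)^2 + (w 0 * x 0 + w 1 * x 1)^2
          - (w 0^2 + w 1^2) * (x 0^2 + x 1^2)) * hu2) +
        (((2 * (u 0 * x 0 + u 1 * x 1) * (u 0 * w 0 + u 1 * w 1)
            - (w 0 * x 0 + w 1 * x 1))^2 + (u 0 * x 0 + u 1 * x 1)^2
          - (x 0^2 + x 1^2)) * hw2)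
    have h1 := congrArg Real.sqrt hsq
    rwa [Real.sqrt_sq (norm_nonneg _), Real.sqrt_sq (by positivity)] at h1
  refine ⟨hnorm, fun hne => ?_⟩
  have habs : |(inner ℝ u w : ℝ)| < 1 := by
    rcases lt_or_eq_of_le (abs_real_inner_le_norm u w) with h | h
    · simpa [hu, hw] using h
    · exfalso
      apply hne
      rw [hu, hw, mul_one] at h
      rcases abs_eq (by norm_num : (0:ℝ) ≤ 1) |>.mp h with h1 | h1
      · have : ‖w‖ • u = ‖u‖ • w := inner_eq_norm_mul_iff_real.mp (by rw [h1, hu, hw]; ring)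
        rw [hu, hw, one_smul, one_smul] at this
        rw [hL₁, hL₂, this]
      · have : ‖-w‖ • u = ‖u‖ • (-w) := inner_eq_norm_mul_iff_real.mp
          (by rw [inner_neg_right, h1, hu, norm_neg, hw]; ring)
        rw [hu, norm_neg, hw, one_smul, one_smul] at this
        rw [hL₁, hL₂, this]
        rw [Submodule.span_singleton_eq_span_singleton]
        exact ⟨-1, by simp⟩
  have hiter : ∀ x, ∀ n : ℕ, ‖T^[n] x‖ = |(inner ℝ u w : ℝ)| ^ n * ‖x‖ := by
    intro x n
    induction n with
    | zero => simp
    | succ n ih =>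
      rw [Function.iterate_succ_apply', hnorm, ih, pow_succ]
      ring
  refine ⟨habs, hiter, fun x => ?_⟩
  rw [tendsto_zero_iff_norm_tendsto_zero]
  have h0 : Tendsto (fun n : ℕ => |(inner ℝ u w : ℝ)| ^ n * ‖x‖) atTop (nhds (0 * ‖x‖)) :=
    (tendsto_pow_atTop_nhds_zero_of_lt_one (abs_nonneg _) habs).mul_const _
  rw [zero_mul] at h0
  exact h0.congr fun n => (hiter x n).symm
end

section
/- Let L₁ and L₂ be two affine lines in the Euclidean plane ℝ² that intersect in exactly one point f (L₁ ∩ L₂ = {f}), with unit direction vectors u and w respectively. Let T = (1/2)(I + R_{L₂} R_{L₁}) be the Douglas–Rachford operator, where R_{L_i} = 2P_{L_i} − I and P_{L_i} is the metric projection onto the closed convex set L_i. Then for every x ∈ ℝ² and every n ≥ 0, ‖T^n x − f‖ = |⟨u, w⟩|^n ‖x − f‖, and since |⟨u, w⟩| < 1, the Douglas–Rachford iterates from any starting point converge to the common point f at a linear (exponential) rate. -/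
open Metric Filter

/-- Projection onto a line `f + ℝ u` has the explicit inner-product formula. -/
lemma proj_line_eq {E : Type*} [NormedAddCommGroup E] [InnerProductSpace ℝ E]
    (f u : E) (hu : ‖u‖ = 1) (p z : E)
    (hp : ∃ t : ℝ, p = f + t • u)
    (hmin : ∀ t : ℝ, dist z p ≤ dist z (f + t • u)) :
    p = f + (inner ℝ u (z - f) : ℝ) • u := by
  obtain ⟨t, rfl⟩ := hp
  set s : ℝ := (inner ℝ u (z - f) : ℝ) with hs
  have key : ∀ r : ℝ, dist z (f + r • u) ^ 2
      = ‖z - f‖ ^ 2 - 2 * r * s + r ^ 2 := by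
    intro r
    have h1 : z - (f + r • u) = (z - f) - r • u := by abel
    rw [dist_eq_norm, h1, @norm_sub_sq_real]
    have h2 : (inner ℝ (z - f) (r • u) : ℝ) = r * s := by
      rw [real_inner_smul_right, real_inner_comm]
    have h3 : ‖r • u‖ = |r| := by
      rw [norm_smul, hu, Real.norm_eq_abs, mul_one]
    rw [h2, h3, sq_abs]
    ring
  have hle := hmin s
  have h1 : dist z (f + t • u) ^ 2 ≤ dist z (f + s • u) ^ 2 := by
    have := dist_nonneg (x := z) (y := f + t • u)
    nlinarith [hle]
  rw [key t, key s] at h1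
  have ht : t = s := by nlinarith [sq_nonneg (t - s)]
  rw [ht]

/-- Gram-determinant identity for three vectors in the plane. -/
lemma gram_two (u w v : EuclideanSpace ℝ (Fin 2)) :
    (inner ℝ u u : ℝ) * (inner ℝ w w : ℝ) * (inner ℝ v v : ℝ)
      + 2 * (inner ℝ u v : ℝ) * (inner ℝ w v : ℝ) * (inner ℝ u w : ℝ)
      - (inner ℝ u v : ℝ) ^ 2 * (inner ℝ w w : ℝ)
      - (inner ℝ w v : ℝ) ^ 2 * (inner ℝ u u : ℝ)
      - (inner ℝ u w : ℝ) ^ 2 * (inner ℝ v v : ℝ) = 0 := by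
  simp only [PiLp.inner_apply, RCLike.inner_apply, starRingEnd_apply, star_trivial,
    Fin.sum_univ_two]
  ring

/-- The key one-step norm identity. -/
lemma key_norm (u w v : EuclideanSpace ℝ (Fin 2)) (hu : ‖u‖ = 1) (hw : ‖w‖ = 1) :
    ‖v - (inner ℝ u v : ℝ) • u
        + (2 * (inner ℝ u v : ℝ) * (inner ℝ u w : ℝ) - (inner ℝ w v : ℝ)) • w‖
      = |(inner ℝ u w : ℝ)| * ‖v‖ := by
  set a : ℝ := (inner ℝ u v : ℝ)
  set b : ℝ := (inner ℝ w v : ℝ)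
  set c : ℝ := (inner ℝ u w : ℝ)
  have huu : (inner ℝ u u : ℝ) = 1 := by
    rw [real_inner_self_eq_norm_sq, hu]; norm_num
  have hww : (inner ℝ w w : ℝ) = 1 := by
    rw [real_inner_self_eq_norm_sq, hw]; norm_num
  have hvv : (inner ℝ v v : ℝ) = ‖v‖ ^ 2 := real_inner_self_eq_norm_sq v
  have hgram := gram_two u w v
  rw [huu, hww, hvv] at hgram
  have hsq : ‖v - a • u + (2 * a * c - b) • w‖ ^ 2 = (|c| * ‖v‖) ^ 2 := by
    rw [← real_inner_self_eq_norm_sq]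
    have expand : (inner ℝ (v - a • u + (2 * a * c - b) • w)
        (v - a • u + (2 * a * c - b) • w) : ℝ)
        = ‖v‖ ^ 2 + a ^ 2 * 1 + (2 * a * c - b) ^ 2 * 1
          - 2 * (a * a) + 2 * ((2 * a * c - b) * b) - 2 * (a * ((2 * a * c - b) * c)) := by
      simp only [inner_sub_left, inner_sub_right, inner_add_left, inner_add_right,
        real_inner_smul_left, real_inner_smul_right, huu, hww, hvv]
      rw [real_inner_comm u v, real_inner_comm w v, real_inner_comm u w]
      ring
    rw [expand, mul_pow, sq_abs]
    nlinarith [hgram]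
  have h1 : (0:ℝ) ≤ ‖v - a • u + (2 * a * c - b) • w‖ := norm_nonneg _
  have h2 : (0:ℝ) ≤ |c| * ‖v‖ := mul_nonneg (abs_nonneg _) (norm_nonneg _)
  nlinarith [hsq, h1, h2]

/-- For two affine lines in the Euclidean plane with unit directions `u, w`
meeting in exactly the point `f`, the Douglas–Rachford operator
`T = (1/2)(I + R_{L₂} R_{L₁})` (with metric projections onto the lines) satisfies
`‖Tⁿ x − f‖ = |⟨u,w⟩|ⁿ ‖x − f‖` for all `x` and `n`; since `|⟨u,w⟩| < 1`, the iterates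
converge to `f` from every starting point. -/
theorem douglasRachford_two_affine_lines
    (u w f : EuclideanSpace ℝ (Fin 2)) (hu : ‖u‖ = 1) (hw : ‖w‖ = 1)
    (L₁ L₂ : Set (EuclideanSpace ℝ (Fin 2)))
    (hL₁ : L₁ = {p | ∃ t : ℝ, p = f + t • u})
    (hL₂ : L₂ = {p | ∃ t : ℝ, p = f + t • w})
    (hmeet : L₁ ∩ L₂ = {f})
    (P₁ P₂ : EuclideanSpace ℝ (Fin 2) → EuclideanSpace ℝ (Fin 2))
    (hP₁ : ∀ z, P₁ z ∈ L₁ ∧ ∀ y ∈ L₁, dist z (P₁ z) ≤ dist z y)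
    (hP₂ : ∀ z, P₂ z ∈ L₂ ∧ ∀ y ∈ L₂, dist z (P₂ z) ≤ dist z y)
    (T : EuclideanSpace ℝ (Fin 2) → EuclideanSpace ℝ (Fin 2))
    (hT : ∀ x, T x = (1 / 2 : ℝ) • (x + (2 • P₂ (2 • P₁ x - x) - (2 • P₁ x - x)))) :
    (∀ x, ∀ n : ℕ, ‖T^[n] x - f‖ = |(inner ℝ u w : ℝ)| ^ n * ‖x - f‖) ∧
      |(inner ℝ u w : ℝ)| < 1 ∧
      ∀ x, Tendsto (fun n : ℕ => T^[n] x) atTop (nhds f) := by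
  set c : ℝ := (inner ℝ u w : ℝ) with hc
  -- explicit projection formulas
  have hP₁e : ∀ z, P₁ z = f + (inner ℝ u (z - f) : ℝ) • u := by
    intro z
    refine proj_line_eq f u hu (P₁ z) z ?_ ?_
    · have := (hP₁ z).1; rwa [hL₁] at this
    · intro t
      exact (hP₁ z).2 (f + t • u) (by rw [hL₁]; exact ⟨t, rfl⟩)
  have hP₂e : ∀ z, P₂ z = f + (inner ℝ w (z - f) : ℝ) • w := by
    intro z
    refine proj_line_eq f w hw (P₂ z) z ?_ ?_
    · have := (hP₂ z).1; rwa [hL₂] at this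
    · intro t
      exact (hP₂ z).2 (f + t • w) (by rw [hL₂]; exact ⟨t, rfl⟩)
  -- one-step formula
  have hstep : ∀ y, T y - f
      = (y - f) - (inner ℝ u (y - f) : ℝ) • u
        + (2 * (inner ℝ u (y - f) : ℝ) * c - (inner ℝ w (y - f) : ℝ)) • w := by
    intro y
    set a : ℝ := (inner ℝ u (y - f) : ℝ) with ha
    set b : ℝ := (inner ℝ w (y - f) : ℝ) with hb
    have hr : (2 : ℕ) • P₁ y - y - f = (2 * a) • u - (y - f) := by
      rw [hP₁e y, ← ha, two_smul]
      module
    have hinner : (inner ℝ w ((2 : ℕ) • P₁ y - y - f) : ℝ) = 2 * a * c - b := by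
      rw [hr, inner_sub_right, real_inner_smul_right, ← hb, real_inner_comm u w, ← hc]
    rw [hT y, hP₂e ((2 : ℕ) • P₁ y - y), hinner, hP₁e y, ← ha]
    match_scalars <;> ring
  have honestep : ∀ y, ‖T y - f‖ = |c| * ‖y - f‖ := by
    intro y
    rw [hstep y]
    exact key_norm u w (y - f) hu hw
  -- main iterate formula
  have hiter : ∀ x, ∀ n : ℕ, ‖T^[n] x - f‖ = |c| ^ n * ‖x - f‖ := by
    intro x n
    induction n with
    | zero => simp
    | succ n ih =>
      rw [Function.iterate_succ_apply', honestep, ih, pow_succ]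
      ring
  -- |c| < 1
  have hcle : |c| ≤ 1 := by
    have := abs_real_inner_le_norm u w
    rwa [hu, hw, mul_one] at this
  have hclt : |c| < 1 := by
    rcases lt_or_eq_of_le hcle with h | h
    · exact h
    · exfalso
      have hfu : f + u ∈ L₁ := by rw [hL₁]; exact ⟨1, by rw [one_smul]⟩
      have hune : f + u ≠ f := by
        intro hcontra
        have : u = 0 := by
          have := congrArg (fun z => z - f) hcontra
          simpa using this
        rw [this, norm_zero] at hu; norm_num at hu
      rcases abs_eq (by norm_num : (0:ℝ) ≤ 1) |>.mp h with h1 | h1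
      · -- c = 1 → u = w
        have huw : u = w := (inner_eq_one_iff_of_norm_eq_one hu hw).mp h1
        have hfu2 : f + u ∈ L₂ := by rw [hL₂]; exact ⟨1, by rw [one_smul, huw]⟩
        have : f + u ∈ L₁ ∩ L₂ := ⟨hfu, hfu2⟩
        rw [hmeet] at this
        exact hune this
      · -- c = -1 → u = -w
        have hnw : ‖-w‖ = 1 := by rwa [norm_neg]
        have h2 : (inner ℝ u (-w) : ℝ) = 1 := by
          rw [inner_neg_right]; rw [hc] at h1; rw [h1]; ring
        have huw : u = -w := (inner_eq_one_iff_of_norm_eq_one hu hnw).mp h2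
        have hfu2 : f + u ∈ L₂ := by
          rw [hL₂]; exact ⟨-1, by rw [huw]; module⟩
        have : f + u ∈ L₁ ∩ L₂ := ⟨hfu, hfu2⟩
        rw [hmeet] at this
        exact hune this
  refine ⟨hiter, hclt, ?_⟩
  intro x
  rw [tendsto_iff_dist_tendsto_zero]
  have hlim : Tendsto (fun n : ℕ => |c| ^ n * ‖x - f‖) atTop (nhds 0) := by
    have := (tendsto_pow_atTop_nhds_zero_of_lt_one (abs_nonneg c) hclt).mul_const ‖x - f‖
    simpa using this
  refine hlim.congr fun n => ?_
  rw [dist_eq_norm, hiter x n]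
end

section
/- Let b > 0 and let E = {(x,y) ∈ ℝ² : x² + (y/b)² = 1} be an ellipse, and let f = (x₀, y₀) ∈ E. Suppose P is a map defined on a neighborhood of f in ℝ² such that for each p in that neighborhood, P(p) ∈ E and ‖p − P(p)‖ = infDist(p, E) (P is a nearest-point projection onto E). Then P is differentiable at f and its derivative equals the orthogonal projection of ℝ² onto the tangent direction {(s,t) ∈ ℝ² : x₀ s + (y₀/b²) t = 0}; equivalently, writing H_f for the tangent line to E at f and P_{H_f} for the metric projection onto H_f, one has ‖P(p) − P_{H_f}(p)‖ = o(‖p − f‖) as p → f. -/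
open Metric Asymptotics Topology
open scoped RealInnerProductSpace

/-- The linear subspace `{(s,t) ∈ ℝ² : c s + d t = 0}` of the Euclidean plane. -/
def lineDir (c d : ℝ) : Submodule ℝ (EuclideanSpace ℝ (Fin 2)) where
  carrier := {v : EuclideanSpace ℝ (Fin 2) | c * v 0 + d * v 1 = 0}
  add_mem' := by
    intro a b ha hb
    simp only [Set.mem_setOf_eq, PiLp.add_apply] at *
    linarith
  zero_mem' := by simp
  smul_mem' := by
    intro t a ha
    simp only [Set.mem_setOf_eq, PiLp.smul_apply, smul_eq_mul] at *
    linear_combination t * ha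

lemma aux_inner_two (w z : EuclideanSpace ℝ (Fin 2)) : ⟪w, z⟫ = w 0 * z 0 + w 1 * z 1 := by
  simp [PiLp.inner_apply, Fin.sum_univ_two, RCLike.inner_apply]
  ring

lemma aux_norm_sq_two (w : EuclideanSpace ℝ (Fin 2)) : ‖w‖ ^ 2 = (w 0) ^ 2 + (w 1) ^ 2 := by
  rw [EuclideanSpace.norm_eq, Real.sq_sqrt (by positivity)]
  simp [Fin.sum_univ_two]

lemma aux_abs_le_of_sq_le {a b : ℝ} (hb : 0 ≤ b) (h : a ^ 2 ≤ b ^ 2) : |a| ≤ b := by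
  nlinarith [sq_abs a, abs_nonneg a]

lemma aux_proj_normal (c d : ℝ) (v : EuclideanSpace ℝ (Fin 2)) :
    c * (((lineDir c d).subtypeL.comp (Submodule.orthogonalProjectionOnto (lineDir c d))) v) 0
      + d * (((lineDir c d).subtypeL.comp (Submodule.orthogonalProjectionOnto (lineDir c d))) v) 1 = 0 :=
  (Submodule.orthogonalProjectionOnto (lineDir c d) v).2

lemma aux_proj_tangent (c d : ℝ) (v : EuclideanSpace ℝ (Fin 2)) :
    -d * (((lineDir c d).subtypeL.comp (Submodule.orthogonalProjectionOnto (lineDir c d))) v) 0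
      + c * (((lineDir c d).subtypeL.comp (Submodule.orthogonalProjectionOnto (lineDir c d))) v) 1
    = -d * v 0 + c * v 1 := by
  set L := ((lineDir c d).subtypeL.comp (Submodule.orthogonalProjectionOnto (lineDir c d))) with hL
  set T : EuclideanSpace ℝ (Fin 2) := (WithLp.equiv 2 (Fin 2 → ℝ)).symm ![-d, c] with hT
  have hTmem : T ∈ lineDir c d := by
    show c * T 0 + d * T 1 = 0
    simp [hT]; ring
  have h : ⟪v - (Submodule.orthogonalProjectionOnto (lineDir c d) v : EuclideanSpace ℝ (Fin 2)), T⟫ = 0 :=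
    Submodule.starProjection_inner_eq_zero v T hTmem
  have hLv : (L v : EuclideanSpace ℝ (Fin 2))
      = (Submodule.orthogonalProjectionOnto (lineDir c d) v : EuclideanSpace ℝ (Fin 2)) := rfl
  rw [← hLv, aux_inner_two] at h
  simp only [PiLp.sub_apply, hT, WithLp.equiv_symm_apply, PiLp.toLp_apply, Matrix.cons_val_zero,
    Matrix.cons_val_one, Matrix.head_cons] at h
  linarith [h]

lemma aux_cos_bound (t : ℝ) : |Real.cos t - 1| ≤ t ^ 2 / 2 := by
  have h1 : Real.sin (t/2) ^ 2 = 1/2 - Real.cos t / 2 := by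
    have := Real.sin_sq_eq_half_sub (t/2)
    rw [show 2 * (t/2) = t by ring] at this
    linarith
  have h2 : |Real.sin (t/2)| ≤ |t/2| := Real.abs_sin_le_abs
  have h3 : Real.sin (t/2) ^ 2 ≤ (t/2) ^ 2 := by
    rw [← sq_abs, ← sq_abs (t/2)]
    exact pow_le_pow_left₀ (abs_nonneg _) h2 2
  have h4 : Real.cos t ≤ 1 := Real.cos_le_one t
  rw [abs_sub_comm, abs_of_nonneg (by linarith)]
  nlinarith

lemma aux_sin_bound_nonneg (t : ℝ) (h0 : 0 ≤ t) (h1 : t ≤ 1) : |Real.sin t - t| ≤ t ^ 2 := by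
  rcases eq_or_lt_of_le h0 with h | h
  · simp [← h]
  · have hle : Real.sin t ≤ t := Real.sin_le h0
    have hgt : t - t ^ 3 / 4 < Real.sin t := by have := Real.sin_gt_sub_cube h; linarith [pow_pos h 3]
    have : t ^ 3 ≤ t ^ 2 := by nlinarith
    rw [abs_sub_comm, abs_of_nonneg (by linarith)]
    linarith

lemma aux_sin_bound (t : ℝ) (h1 : |t| ≤ 1) : |Real.sin t - t| ≤ t ^ 2 := by
  rcases le_or_gt 0 t with h | h
  · exact aux_sin_bound_nonneg t h (by rwa [abs_of_nonneg h] at h1)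
  · have := aux_sin_bound_nonneg (-t) (by linarith) (by rwa [abs_of_neg h] at h1)
    rw [Real.sin_neg] at this
    calc |Real.sin t - t| = |-Real.sin t - -t| := by rw [← abs_neg]; ring_nf
      _ ≤ (-t) ^ 2 := this
      _ = t ^ 2 := by ring

set_option maxHeartbeats 400000 in
/-- Any nearest-point projection `P` onto the ellipse
`E = {(x,y) : x² + (y/b)² = 1}` defined near a point `f ∈ E` is differentiable at `f` with
derivative the orthogonal projection onto the tangent direction
`{(s,t) : x₀ s + (y₀/b²) t = 0}`; equivalently `‖P p − P_{H_f} p‖ = o(‖p − f‖)` as `p → f`,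
where `H_f` is the tangent line to `E` at `f`. -/
theorem ellipse_nearest_point_projection_hasFDerivAt
    (b : ℝ) (hb : 0 < b)
    (E : Set (EuclideanSpace ℝ (Fin 2)))
    (hE : E = {p : EuclideanSpace ℝ (Fin 2) | (p 0) ^ 2 + (p 1 / b) ^ 2 = 1})
    (f : EuclideanSpace ℝ (Fin 2)) (hf : f ∈ E)
    (P : EuclideanSpace ℝ (Fin 2) → EuclideanSpace ℝ (Fin 2))
    (s : Set (EuclideanSpace ℝ (Fin 2))) (hs : s ∈ 𝓝 f)
    (hP : ∀ p ∈ s, P p ∈ E ∧ ‖p - P p‖ = infDist p E) :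
    HasFDerivAt P
      ((lineDir (f 0) (f 1 / b ^ 2)).subtypeL.comp
        (Submodule.orthogonalProjectionOnto (lineDir (f 0) (f 1 / b ^ 2)))) f ∧
    (fun p => P p - (f + ((lineDir (f 0) (f 1 / b ^ 2)).subtypeL.comp
        (Submodule.orthogonalProjectionOnto (lineDir (f 0) (f 1 / b ^ 2)))) (p - f)))
      =o[𝓝 f] (fun p => p - f) := by
  have hb' : b ≠ 0 := ne_of_gt hb
  set c : ℝ := f 0 with hc
  set y₀ : ℝ := f 1 with hy₀
  have hfE : c ^ 2 + (y₀ / b) ^ 2 = 1 := by rw [hE] at hf; exact hf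
  set d : ℝ := y₀ / b ^ 2 with hd
  set L := (lineDir c d).subtypeL.comp (Submodule.orthogonalProjectionOnto (lineDir c d)) with hLdef
  obtain ⟨m, hmdef⟩ : ∃ m : ℝ, m = c ^ 2 + d ^ 2 := ⟨_, rfl⟩
  have hm : 0 < m := by
    rcases eq_or_ne c 0 with h0 | h0
    · have hy : y₀ ≠ 0 := by
        intro h
        rw [h0, h] at hfE
        norm_num at hfE
      have hd0 : d ≠ 0 := by
        rw [hd]
        exact div_ne_zero hy (by positivity)
      have h2 : 0 < d ^ 2 := by positivity
      rw [hmdef]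
      nlinarith [sq_nonneg c]
    · have h2 : 0 < c ^ 2 := by positivity
      rw [hmdef]
      nlinarith [sq_nonneg d]
  obtain ⟨sm, hsmdef⟩ : ∃ sm : ℝ, sm = Real.sqrt m := ⟨_, rfl⟩
  have hsm : sm ^ 2 = m := by rw [hsmdef]; exact Real.sq_sqrt hm.le
  have hsm0 : 0 < sm := by rw [hsmdef]; exact Real.sqrt_pos.mpr hm
  have hkey : ∀ w : EuclideanSpace ℝ (Fin 2),
      (-d * w 0 + c * w 1) ^ 2 + (c * w 0 + d * w 1) ^ 2 = m * ‖w‖ ^ 2 := by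
    intro w
    rw [aux_norm_sq_two, hmdef]
    ring
  have hcabs : |c| ≤ 1 := aux_abs_le_of_sq_le zero_le_one (by nlinarith [sq_nonneg (y₀/b)])
  have hyabs : |y₀| ≤ b := by
    apply aux_abs_le_of_sq_le hb.le
    have h2 : (y₀ / b) ^ 2 ≤ 1 := by nlinarith [sq_nonneg c]
    calc y₀ ^ 2 = (y₀ / b) ^ 2 * b ^ 2 := by field_simp
      _ ≤ 1 * b ^ 2 := mul_le_mul_of_nonneg_right h2 (sq_nonneg b)
      _ = b ^ 2 := one_mul _
  obtain ⟨K1, hK1def⟩ : ∃ K1 : ℝ, K1 = |c| + |y₀| / b := ⟨_, rfl⟩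
  obtain ⟨K2, hK2def⟩ : ∃ K2 : ℝ, K2 = |y₀| + |c| * b := ⟨_, rfl⟩
  have hK1 : 0 ≤ K1 := by rw [hK1def]; positivity
  have hK2 : 0 ≤ K2 := by rw [hK2def]; positivity
  obtain ⟨C0, hC0def⟩ : ∃ C0 : ℝ, C0 = (|c| + |d|) * (K1 + K2) := ⟨_, rfl⟩
  have hC0 : 0 ≤ C0 := by
    rw [hC0def]
    apply mul_nonneg (by positivity)
    linarith
  obtain ⟨c1, hc1def⟩ : ∃ c1 : ℝ, c1 = 1 / (b ^ 2 * m) := ⟨_, rfl⟩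
  have hbm2 : 0 < b ^ 2 * m := mul_pos (by positivity) hm
  have hc1 : 0 < c1 := by rw [hc1def]; positivity
  obtain ⟨C3, hC3def⟩ : ∃ C3 : ℝ, C3 = 4 * (1 + 1 / b ^ 2) := ⟨_, rfl⟩
  have hC3 : 0 < C3 := by rw [hC3def]; positivity
  obtain ⟨C4, hC4def⟩ : ∃ C4 : ℝ,
      C4 = 2 * (C0 * c1) ^ 2 + 2 * sm * C0 * c1 + sm * C3 := ⟨_, rfl⟩
  have hC4 : 0 ≤ C4 := by
    rw [hC4def]
    have := sq_nonneg (C0 * c1)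
    have h1 : 0 ≤ sm * C0 * c1 := mul_nonneg (mul_nonneg hsm0.le hC0) hc1.le
    have h2 : 0 ≤ sm * C3 := mul_nonneg hsm0.le hC3.le
    linarith
  obtain ⟨C5, hC5def⟩ : ∃ C5 : ℝ, C5 = C4 + C3 ^ 2 / 4 := ⟨_, rfl⟩
  have hC5 : 0 ≤ C5 := by
    rw [hC5def]
    have := sq_nonneg C3
    linarith
  have hdb : y₀ / b = d * b := by rw [hd]; field_simp
  have hfEb : c ^ 2 * b ^ 2 + y₀ ^ 2 = b ^ 2 := by
    have h := hfE
    field_simp at h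
    linarith [h]
  -- the key little-o statement
  have key : (fun p => P p - f - L (p - f)) =o[𝓝 f] (fun p => p - f) := by
    rw [isLittleO_iff]
    intro ε hε
    obtain ⟨δ, hδdef⟩ : ∃ δ : ℝ,
        δ = min 1 (min (b * sm) (ε ^ 2 * m / (C5 + 1))) := ⟨_, rfl⟩
    have hδ0 : 0 < δ := by
      rw [hδdef]
      apply lt_min one_pos
      apply lt_min (mul_pos hb hsm0)
      exact div_pos (mul_pos (pow_pos hε 2) hm) (by linarith only [hC5])
    filter_upwards [hs, Metric.ball_mem_nhds f hδ0] with p hp hpball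
    obtain ⟨hqE, hdist⟩ := hP p hp
    set q := P p with hq
    set v : EuclideanSpace ℝ (Fin 2) := p - f with hv
    set u : EuclideanSpace ℝ (Fin 2) := q - f with hu
    obtain ⟨nv, hnvdef⟩ : ∃ nv : ℝ, nv = ‖v‖ := ⟨_, rfl⟩
    have hnv0 : 0 ≤ nv := hnvdef ▸ norm_nonneg v
    have hvδ : nv < δ := by
      rw [hnvdef, hv, ← dist_eq_norm]
      exact hpball
    have hnv1 : nv ≤ 1 := le_trans hvδ.le (hδdef ▸ min_le_left _ _)
    have hnvb : nv ≤ b * sm :=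
      le_trans hvδ.le (hδdef ▸ le_trans (min_le_right _ _) (min_le_left _ _))
    have hnvε : nv ≤ ε ^ 2 * m / (C5 + 1) :=
      le_trans hvδ.le (hδdef ▸ le_trans (min_le_right _ _) (min_le_right _ _))
    -- distance facts
    have hpqv : ‖p - q‖ ≤ nv := by
      rw [hdist]
      calc infDist p E ≤ dist p f := infDist_le_dist_of_mem hf
        _ = nv := by rw [hnvdef, hv, dist_eq_norm]
    have huv : ‖u‖ ≤ 2 * nv := by
      have h1 : u = (q - p) + (p - f) := by rw [hu]; abel
      calc ‖u‖ = ‖(q - p) + (p - f)‖ := by rw [h1]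
        _ ≤ ‖q - p‖ + ‖p - f‖ := norm_add_le _ _
        _ ≤ nv + nv := by
            rw [norm_sub_rev]
            refine add_le_add hpqv ?_
            rw [hnvdef, hv]
        _ = 2 * nv := by ring
    -- chord identity
    have hqE2 : (q 0) ^ 2 + (q 1 / b) ^ 2 = 1 := by rw [hE] at hqE; exact hqE
    have hu0 : u 0 = q 0 - c := by rw [hu, hc]; simp [PiLp.sub_apply]
    have hu1 : u 1 = q 1 - y₀ := by rw [hu, hy₀]; simp [PiLp.sub_apply]
    obtain ⟨Qu, hQudef⟩ : ∃ Qu : ℝ, Qu = (u 0) ^ 2 + (u 1) ^ 2 / b ^ 2 := ⟨_, rfl⟩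
    have hQu0 : 0 ≤ Qu := by rw [hQudef]; positivity
    have hQuB : Qu ≤ C3 * nv ^ 2 := by
      have h1 : (u 0) ^ 2 + (u 1) ^ 2 = ‖u‖ ^ 2 := (aux_norm_sq_two u).symm
      have h2 : ‖u‖ ^ 2 ≤ (2 * nv) ^ 2 := pow_le_pow_left₀ (norm_nonneg u) huv 2
      have hb2 : 0 < 1 / b ^ 2 := by positivity
      have h3 : (u 1) ^ 2 / b ^ 2 ≤ (4 * nv ^ 2 - (u 0) ^ 2) * (1 / b ^ 2) := by
        rw [div_eq_mul_one_div]
        apply mul_le_mul_of_nonneg_right _ hb2.le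
        nlinarith only [h1, h2]
      have h4 : (4 * nv ^ 2 - (u 0) ^ 2) * (1 / b ^ 2) ≤ (4 * nv ^ 2) * (1 / b ^ 2) :=
        mul_le_mul_of_nonneg_right (by linarith only [sq_nonneg (u 0)]) hb2.le
      rw [hQudef, hC3def]
      nlinarith only [h3, h4, h1, h2, sq_nonneg (u 1)]
    have hchord : c * u 0 + d * u 1 = -(1/2) * Qu := by
      rw [hu0, hu1] at hQudef ⊢
      linear_combination (1/2) * hqE2 - (1/2) * hfE + (1/2) * hQudef
    -- the parameter t
    obtain ⟨Tcv, hTcvdef⟩ : ∃ Tcv : ℝ, Tcv = -d * v 0 + c * v 1 := ⟨_, rfl⟩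
    obtain ⟨Ncv, hNcvdef⟩ : ∃ Ncv : ℝ, Ncv = c * v 0 + d * v 1 := ⟨_, rfl⟩
    obtain ⟨t, htdef⟩ : ∃ t : ℝ, t = Tcv / (b * m) := ⟨_, rfl⟩
    have hbm : b * m ≠ 0 := (mul_pos hb hm).ne'
    have ht_eq : t * (b * m) = Tcv := by
      rw [htdef]
      field_simp
    have hTNv : Tcv ^ 2 + Ncv ^ 2 = m * nv ^ 2 := by
      rw [hTcvdef, hNcvdef, hnvdef]
      exact hkey v
    have hNv : |Ncv| ≤ sm * nv := by
      apply aux_abs_le_of_sq_le (mul_nonneg hsm0.le hnv0)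
      have h8 : (sm * nv) ^ 2 = m * nv ^ 2 := by rw [mul_pow, hsm]
      rw [h8]
      linarith only [hTNv, sq_nonneg Tcv]
    have ht2 : t ^ 2 ≤ c1 * nv ^ 2 := by
      have h : t ^ 2 * (b * m) ^ 2 = Tcv ^ 2 := by rw [← ht_eq]; ring
      have h2 : Tcv ^ 2 ≤ m * nv ^ 2 := by linarith only [hTNv, sq_nonneg Ncv]
      rw [hc1def, div_mul_eq_mul_div, one_mul, le_div_iff₀ hbm2]
      have h5 : (t ^ 2 * (b ^ 2 * m)) * m ≤ nv ^ 2 * m := by linarith only [h, h2]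
      exact le_of_mul_le_mul_right h5 hm
    have ht1 : t ^ 2 ≤ 1 := by
      have h1 : nv ^ 2 ≤ (b * sm) ^ 2 := pow_le_pow_left₀ hnv0 hnvb 2
      have h2 : c1 * (b * sm) ^ 2 = 1 := by
        have h3 : (b * sm) ^ 2 = b ^ 2 * m := by rw [mul_pow, hsm]
        rw [h3, hc1def]
        exact one_div_mul_cancel hbm2.ne'
      have h4 : c1 * nv ^ 2 ≤ c1 * (b * sm) ^ 2 := mul_le_mul_of_nonneg_left h1 hc1.le
      linarith only [ht2, h4, h2]
    have htabs : |t| ≤ 1 := aux_abs_le_of_sq_le zero_le_one (by simpa using ht1)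
    have hcos := aux_cos_bound t
    have hsin := aux_sin_bound t htabs
    -- the curve point
    set w : EuclideanSpace ℝ (Fin 2) := (WithLp.equiv 2 (Fin 2 → ℝ)).symm
      ![c * Real.cos t - (y₀ / b) * Real.sin t, y₀ * Real.cos t + c * b * Real.sin t] with hwdef
    have hw0 : w 0 = c * Real.cos t - (y₀ / b) * Real.sin t := by rw [hwdef]; simp
    have hw1 : w 1 = y₀ * Real.cos t + c * b * Real.sin t := by rw [hwdef]; simp
    have hwE : w ∈ E := by
      rw [hE]
      show (w 0) ^ 2 + (w 1 / b) ^ 2 = 1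
      rw [hw0, hw1]
      have hsc := Real.sin_sq_add_cos_sq t
      field_simp
      linear_combination (b ^ 2 * c ^ 2 + y₀ ^ 2) * hsc + hfEb
    -- remainder terms
    obtain ⟨R0, hR0def⟩ : ∃ R0 : ℝ,
        R0 = c * (Real.cos t - 1) - (y₀ / b) * (Real.sin t - t) := ⟨_, rfl⟩
    obtain ⟨R1, hR1def⟩ : ∃ R1 : ℝ,
        R1 = y₀ * (Real.cos t - 1) + c * b * (Real.sin t - t) := ⟨_, rfl⟩
    have hR0b : |R0| ≤ K1 * t ^ 2 := by
      rw [hR0def]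
      calc |c * (Real.cos t - 1) - (y₀ / b) * (Real.sin t - t)|
          ≤ |c * (Real.cos t - 1)| + |(y₀ / b) * (Real.sin t - t)| := abs_sub _ _
        _ = |c| * |Real.cos t - 1| + (|y₀| / b) * |Real.sin t - t| := by
            rw [abs_mul, abs_mul, abs_div, abs_of_pos hb]
        _ ≤ |c| * (t ^ 2 / 2) + (|y₀| / b) * t ^ 2 := by
            apply add_le_add
            · exact mul_le_mul_of_nonneg_left hcos (abs_nonneg _)
            · exact mul_le_mul_of_nonneg_left hsin (by positivity)
        _ ≤ K1 * t ^ 2 := by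
            rw [hK1def]
            nlinarith only [sq_nonneg t, abs_nonneg c]
    have hR1b : |R1| ≤ K2 * t ^ 2 := by
      rw [hR1def]
      calc |y₀ * (Real.cos t - 1) + c * b * (Real.sin t - t)|
          ≤ |y₀ * (Real.cos t - 1)| + |c * b * (Real.sin t - t)| := abs_add_le _ _
        _ = |y₀| * |Real.cos t - 1| + (|c| * b) * |Real.sin t - t| := by
            rw [abs_mul, abs_mul, abs_mul, abs_of_pos hb]
        _ ≤ |y₀| * (t ^ 2 / 2) + (|c| * b) * t ^ 2 := by
            apply add_le_add
            · exact mul_le_mul_of_nonneg_left hcos (abs_nonneg _)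
            · exact mul_le_mul_of_nonneg_left hsin (by positivity)
        _ ≤ K2 * t ^ 2 := by
            rw [hK2def]
            nlinarith only [sq_nonneg t, abs_nonneg y₀, hb]
    obtain ⟨TcR, hTcRdef⟩ : ∃ TcR : ℝ, TcR = -d * R0 + c * R1 := ⟨_, rfl⟩
    obtain ⟨NcR, hNcRdef⟩ : ∃ NcR : ℝ, NcR = c * R0 + d * R1 := ⟨_, rfl⟩
    have hTcRb : |TcR| ≤ C0 * t ^ 2 := by
      calc |TcR| ≤ |d| * |R0| + |c| * |R1| := by
            rw [hTcRdef]
            calc |(-d) * R0 + c * R1| ≤ |(-d) * R0| + |c * R1| := abs_add_le _ _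
              _ = |d| * |R0| + |c| * |R1| := by rw [abs_mul, abs_mul, abs_neg]
        _ ≤ |d| * (K1 * t ^ 2) + |c| * (K2 * t ^ 2) := by
            apply add_le_add
            · exact mul_le_mul_of_nonneg_left hR0b (abs_nonneg _)
            · exact mul_le_mul_of_nonneg_left hR1b (abs_nonneg _)
        _ ≤ C0 * t ^ 2 := by
            rw [hC0def]
            linarith only [mul_nonneg (mul_nonneg (abs_nonneg c) hK1) (sq_nonneg t),
              mul_nonneg (mul_nonneg (abs_nonneg d) hK2) (sq_nonneg t)]
    have hNcRb : |NcR| ≤ C0 * t ^ 2 := by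
      calc |NcR| ≤ |c| * |R0| + |d| * |R1| := by
            rw [hNcRdef]
            calc |c * R0 + d * R1| ≤ |c * R0| + |d * R1| := abs_add_le _ _
              _ = |c| * |R0| + |d| * |R1| := by rw [abs_mul, abs_mul]
        _ ≤ |c| * (K1 * t ^ 2) + |d| * (K2 * t ^ 2) := by
            apply add_le_add
            · exact mul_le_mul_of_nonneg_left hR0b (abs_nonneg _)
            · exact mul_le_mul_of_nonneg_left hR1b (abs_nonneg _)
        _ ≤ C0 * t ^ 2 := by
            rw [hC0def]
            linarith only [mul_nonneg (mul_nonneg (abs_nonneg c) hK2) (sq_nonneg t),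
              mul_nonneg (mul_nonneg (abs_nonneg d) hK1) (sq_nonneg t)]
    -- components of p - w
    have hv0 : v 0 = p 0 - c := by rw [hv, hc]; simp [PiLp.sub_apply]
    have hv1 : v 1 = p 1 - y₀ := by rw [hv, hy₀]; simp [PiLp.sub_apply]
    have hpw0 : (p - w) 0 = v 0 + (y₀ / b) * t - R0 := by
      have h : (p - w) 0 = p 0 - w 0 := by simp [PiLp.sub_apply]
      rw [h, hw0, hv0, hR0def]
      ring
    have hpw1 : (p - w) 1 = v 1 - c * b * t - R1 := by
      have h : (p - w) 1 = p 1 - w 1 := by simp [PiLp.sub_apply]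
      rw [h, hw1, hv1, hR1def]
      ring
    have hbm' : t * (b * m) = -d * v 0 + c * v 1 := ht_eq.trans hTcvdef
    have hTpw : -d * (p - w) 0 + c * (p - w) 1 = -TcR := by
      rw [hpw0, hpw1, hTcRdef]
      linear_combination (-1) * hbm' + (t * b) * hmdef + (-(d * t)) * hdb
    have hNpw : c * (p - w) 0 + d * (p - w) 1 = Ncv - NcR := by
      rw [hpw0, hpw1, hNcRdef]
      linear_combination (-1) * hNcvdef + (c * t) * hdb
    -- main distance inequality
    have hdistw : ‖p - q‖ ≤ ‖p - w‖ := by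
      rw [hdist]
      calc infDist p E ≤ dist p w := infDist_le_dist_of_mem hwE
        _ = ‖p - w‖ := dist_eq_norm p w
    have hsq : m * ‖p - q‖ ^ 2 ≤ m * ‖p - w‖ ^ 2 := by
      apply mul_le_mul_of_nonneg_left _ hm.le
      exact pow_le_pow_left₀ (norm_nonneg _) hdistw 2
    have hvu : p - q = v - u := by rw [hv, hu]; abel
    have hvu0 : (p - q) 0 = v 0 - u 0 := by rw [hvu]; simp [PiLp.sub_apply]
    have hvu1 : (p - q) 1 = v 1 - u 1 := by rw [hvu]; simp [PiLp.sub_apply]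
    obtain ⟨Tvu, hTvudef⟩ : ∃ Tvu : ℝ, Tvu = -d * (v 0 - u 0) + c * (v 1 - u 1) := ⟨_, rfl⟩
    have hA : Tvu ^ 2 + (Ncv + (1/2) * Qu) ^ 2 ≤ TcR ^ 2 + (Ncv - NcR) ^ 2 := by
      have e1 := hkey (p - q)
      have e2 := hkey (p - w)
      rw [hvu0, hvu1] at e1
      rw [hTpw, hNpw] at e2
      have e3 : c * (v 0 - u 0) + d * (v 1 - u 1) = Ncv + (1/2) * Qu := by
        linear_combination (-1) * hNcvdef - hchord
      rw [e3, ← hTvudef] at e1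
      have e4 : (-TcR) ^ 2 = TcR ^ 2 := by ring
      rw [e4] at e2
      linarith only [hsq, e1, e2]
    -- assemble the cubic bound
    have hNcR' : |NcR| ≤ C0 * (c1 * nv ^ 2) := by
      calc |NcR| ≤ C0 * t ^ 2 := hNcRb
        _ ≤ C0 * (c1 * nv ^ 2) := mul_le_mul_of_nonneg_left ht2 hC0
    have i1 : TcR ^ 2 ≤ (C0 * c1) ^ 2 * nv ^ 4 := by
      have a1 : TcR ^ 2 ≤ (C0 * t ^ 2) ^ 2 := by
        rw [← sq_abs TcR]
        exact pow_le_pow_left₀ (abs_nonneg _) hTcRb 2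
      have a2 : (t ^ 2) ^ 2 ≤ (c1 * nv ^ 2) ^ 2 := pow_le_pow_left₀ (sq_nonneg t) ht2 2
      have a3 : C0 ^ 2 * (t ^ 2) ^ 2 ≤ C0 ^ 2 * (c1 * nv ^ 2) ^ 2 :=
        mul_le_mul_of_nonneg_left a2 (sq_nonneg C0)
      linarith only [a1, a3]
    have i2 : NcR ^ 2 ≤ (C0 * c1) ^ 2 * nv ^ 4 := by
      have a1 : NcR ^ 2 ≤ (C0 * (c1 * nv ^ 2)) ^ 2 := by
        rw [← sq_abs NcR]
        exact pow_le_pow_left₀ (abs_nonneg _) hNcR' 2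
      linarith only [a1]
    have i3 : -(Ncv * NcR) ≤ (sm * nv) * (C0 * (c1 * nv ^ 2)) := by
      calc -(Ncv * NcR) ≤ |Ncv * NcR| := neg_le_abs _
        _ = |Ncv| * |NcR| := abs_mul _ _
        _ ≤ (sm * nv) * (C0 * (c1 * nv ^ 2)) :=
            mul_le_mul hNv hNcR' (abs_nonneg _) (mul_nonneg hsm0.le hnv0)
    have i4 : -(Ncv * Qu) ≤ (sm * nv) * (C3 * nv ^ 2) := by
      have step : -(Ncv * Qu) ≤ |Ncv| * Qu := by
        have h7 : (-Ncv) * Qu ≤ |Ncv| * Qu := mul_le_mul_of_nonneg_right (neg_le_abs Ncv) hQu0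
        linarith only [h7]
      calc -(Ncv * Qu) ≤ |Ncv| * Qu := step
        _ ≤ (sm * nv) * (C3 * nv ^ 2) := mul_le_mul hNv hQuB hQu0 (mul_nonneg hsm0.le hnv0)
    have i5 : nv ^ 4 ≤ nv ^ 3 := pow_le_pow_of_le_one hnv0 hnv1 (by norm_num)
    have hcubic : Tvu ^ 2 ≤ C4 * nv ^ 3 := by
      have j : Tvu ^ 2 ≤ TcR ^ 2 + NcR ^ 2 + 2 * (-(Ncv * NcR)) + (-(Ncv * Qu)) := by
        have ex1 : TcR ^ 2 + (Ncv - NcR) ^ 2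
            = TcR ^ 2 + NcR ^ 2 + 2 * (-(Ncv * NcR)) + Ncv ^ 2 := by ring
        have ex2 : (Ncv + (1/2) * Qu) ^ 2
            = Ncv ^ 2 + (Ncv * Qu) + (1/4) * Qu ^ 2 := by ring
        have hQ2 : 0 ≤ (1/4) * Qu ^ 2 := by positivity
        linarith only [hA, ex1, ex2, hQ2]
      have k1 : (C0 * c1) ^ 2 * nv ^ 4 ≤ (C0 * c1) ^ 2 * nv ^ 3 :=
        mul_le_mul_of_nonneg_left i5 (sq_nonneg (C0 * c1))
      have k2 : (sm * nv) * (C0 * (c1 * nv ^ 2)) = sm * C0 * c1 * nv ^ 3 := by ring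
      have k3 : (sm * nv) * (C3 * nv ^ 2) = sm * C3 * nv ^ 3 := by ring
      rw [hC4def]
      linarith only [j, i1, i2, i3, i4, k1, k2, k3]
    -- the vector g
    have hgoal_vec : P p - f - L (p - f) = u - L v := by
      rw [hu, hv, hq]
    set g : EuclideanSpace ℝ (Fin 2) := u - L v with hgdef
    have hg0 : g 0 = u 0 - (L v) 0 := by rw [hgdef]; simp [PiLp.sub_apply]
    have hg1 : g 1 = u 1 - (L v) 1 := by rw [hgdef]; simp [PiLp.sub_apply]
    have hprojT := aux_proj_tangent c d v
    have hprojN := aux_proj_normal c d v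
    rw [← hLdef] at hprojT hprojN
    have hTg : -d * g 0 + c * g 1 = -Tvu := by
      rw [hg0, hg1]
      linear_combination (-1) * hprojT + hTvudef
    have hNg : c * g 0 + d * g 1 = -(1/2) * Qu := by
      rw [hg0, hg1]
      linear_combination hchord - hprojN
    have hkeyg := hkey g
    rw [hTg, hNg] at hkeyg
    have hgsq : m * ‖g‖ ^ 2 ≤ C5 * nv ^ 3 := by
      have hkeyg' : m * ‖g‖ ^ 2 = Tvu ^ 2 + (1/4) * Qu ^ 2 := by linear_combination -hkeyg
      have q1 : Qu ^ 2 ≤ (C3 * nv ^ 2) ^ 2 := pow_le_pow_left₀ hQu0 hQuB 2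
      have q2 : (C3 * nv ^ 2) ^ 2 = C3 ^ 2 * nv ^ 4 := by ring
      have k2 : C3 ^ 2 * nv ^ 4 ≤ C3 ^ 2 * nv ^ 3 :=
        mul_le_mul_of_nonneg_left i5 (sq_nonneg C3)
      rw [hC5def]
      linarith only [hkeyg', hcubic, q1, q2, k2]
    -- conclude
    have hfinal : ‖g‖ ≤ ε * nv := by
      have h1 : ‖g‖ ^ 2 ≤ (ε * nv) ^ 2 := by
        have h3 : nv * (C5 + 1) ≤ ε ^ 2 * m := by
          rw [← le_div_iff₀ (by linarith only [hC5])]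
          exact hnvε
        have h2 : C5 * nv ≤ ε ^ 2 * m := by nlinarith only [hnv0, h3, hC5]
        have h4 : m * ‖g‖ ^ 2 ≤ (C5 * nv) * nv ^ 2 := by linarith only [hgsq]
        have h5 : (C5 * nv) * nv ^ 2 ≤ (ε ^ 2 * m) * nv ^ 2 :=
          mul_le_mul_of_nonneg_right h2 (sq_nonneg nv)
        have h6 : m * ‖g‖ ^ 2 ≤ m * ((ε * nv) ^ 2) := by linarith only [h4, h5]
        exact le_of_mul_le_mul_left h6 hm
      have h6 := aux_abs_le_of_sq_le (mul_nonneg hε.le hnv0) h1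
      rwa [abs_of_nonneg (norm_nonneg g)] at h6
    calc ‖P p - f - L (p - f)‖ = ‖g‖ := by rw [hgoal_vec, hgdef]
      _ ≤ ε * nv := hfinal
      _ = ε * ‖p - f‖ := by rw [hnvdef, hv]
  -- P f = f
  have hPf : P f = f := by
    have hfs : f ∈ s := mem_of_mem_nhds hs
    have h := (hP f hfs).2
    rw [infDist_zero_of_mem hf, norm_eq_zero, sub_eq_zero] at h
    exact h.symm
  constructor
  · refine HasFDerivAt.of_isLittleO ?_
    rw [hPf]
    exact key
  · have heq : (fun p => P p - (f + L (p - f))) = fun p => P p - f - L (p - f) := by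
      funext p
      rw [sub_add_eq_sub_sub]
    rw [heq]
    exact key
end

section
/- Let b > 0, let E = {(x,y) ∈ ℝ² : x² + (y/b)² = 1} be an ellipse, let L be a line in ℝ², and let f ∈ E ∩ L be a feasible point at which L is not tangent to E (L is distinct from the tangent line to E at f). Then the Douglas–Rachford algorithm is locally convergent at f: there exists δ > 0 such that every sequence (x_n) with ‖x_0 − f‖ < δ generated by x_{n+1} = (1/2)(x_n + R_L R_E x_n), where R_E x = 2a − x for a nearest point a of E to x and R_L y = 2P_L y − y, converges to f. -/
open Metric Filter Topology RealInnerProductSpace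

lemma inner2 (x y : EuclideanSpace ℝ (Fin 2)) : ⟪x, y⟫ = x 0 * y 0 + x 1 * y 1 := by
  simp [PiLp.inner_apply, Fin.sum_univ_two, RCLike.inner_apply]
  ring

lemma normsq2 (x : EuclideanSpace ℝ (Fin 2)) : ‖x‖^2 = (x 0)^2 + (x 1)^2 := by
  rw [EuclideanSpace.norm_eq, Real.sq_sqrt]
  · simp [Fin.sum_univ_two, sq_abs]
  · positivity

lemma norm_le2 (x : EuclideanSpace ℝ (Fin 2)) : ‖x‖ ≤ |x 0| + |x 1| := by
  have h := normsq2 x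
  nlinarith [norm_nonneg x, abs_nonneg (x 0), abs_nonneg (x 1), sq_abs (x 0), sq_abs (x 1),
    mul_nonneg (abs_nonneg (x 0)) (abs_nonneg (x 1))]

lemma expand2 (t n : EuclideanSpace ℝ (Fin 2)) (ht : ‖t‖ = 1) (hn : ‖n‖ = 1)
    (ho : ⟪t, n⟫ = 0) (v : EuclideanSpace ℝ (Fin 2)) :
    v = ⟪v, t⟫ • t + ⟪v, n⟫ • n := by
  have ht2 : (t 0)^2 + (t 1)^2 = 1 := by rw [← normsq2, ht]; norm_num
  have hn2 : (n 0)^2 + (n 1)^2 = 1 := by rw [← normsq2, hn]; norm_num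
  have ho2 : t 0 * n 0 + t 1 * n 1 = 0 := by rw [← inner2, ho]
  set D := t 0 * n 1 - t 1 * n 0 with hD
  have hD2 : D^2 = 1 := by
    linear_combination (n 0 ^ 2 + n 1 ^ 2) * ht2 + hn2 - (t 0 * n 0 + t 1 * n 1) * ho2
  have hn0 : n 0 = -(D * t 1) := by linear_combination t 0 * ho2 - n 0 * ht2
  have hn1 : n 1 = D * t 0 := by linear_combination t 1 * ho2 - n 1 * ht2
  have e0 : v 0 = (v 0 * t 0 + v 1 * t 1) * t 0 + (v 0 * n 0 + v 1 * n 1) * n 0 := by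
    rw [hn0, hn1]
    linear_combination (-(v 0 * t 1 ^ 2 - v 1 * t 0 * t 1)) * hD2 - v 0 * ht2
  have e1 : v 1 = (v 0 * t 0 + v 1 * t 1) * t 1 + (v 0 * n 0 + v 1 * n 1) * n 1 := by
    rw [hn0, hn1]
    linear_combination (v 0 * t 0 * t 1 - v 1 * t 0 ^ 2) * hD2 - v 1 * ht2
  ext i
  fin_cases i <;> simp [inner2, PiLp.add_apply, PiLp.smul_apply, smul_eq_mul]
  · exact e0
  · exact e1

lemma parseval2 (t n : EuclideanSpace ℝ (Fin 2)) (ht : ‖t‖ = 1) (hn : ‖n‖ = 1)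
    (ho : ⟪t, n⟫ = 0) (v : EuclideanSpace ℝ (Fin 2)) :
    ‖v‖^2 = ⟪v, t⟫^2 + ⟪v, n⟫^2 := by
  have h := expand2 t n ht hn ho v
  have h2 : ‖v‖^2 = ⟪v, v⟫ := (real_inner_self_eq_norm_sq v).symm
  rw [h2]
  nth_rewrite 2 [h]
  rw [inner_add_right, real_inner_smul_right, real_inner_smul_right]
  ring

lemma norm_comb2 (t n : EuclideanSpace ℝ (Fin 2)) (ht : ‖t‖ = 1) (hn : ‖n‖ = 1)
    (ho : ⟪t, n⟫ = 0) (p q : ℝ) : ‖p • t + q • n‖^2 = p^2 + q^2 := by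
  have h1 : ⟪n, t⟫ = (0:ℝ) := by rw [real_inner_comm]; exact ho
  have h2 : ⟪t, t⟫ = (1:ℝ) := by rw [real_inner_self_eq_norm_sq, ht]; norm_num
  have h3 : ⟪n, n⟫ = (1:ℝ) := by rw [real_inner_self_eq_norm_sq, hn]; norm_num
  rw [parseval2 t n ht hn ho, inner_add_left, inner_add_left, real_inner_smul_left,
    real_inner_smul_left, real_inner_smul_left, real_inner_smul_left, h1, h2, h3, ho]
  ring

lemma cos1_taylor (h : ℝ) (hh : |h| ≤ 1) : |Real.cos h - 1| ≤ h^2 := by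
  have hc := Real.cos_bound hh
  have h4 : |h|^4 ≤ h^2 := by
    have : |h|^4 ≤ |h|^2 := pow_le_pow_of_le_one (abs_nonneg h) hh (by norm_num)
    simpa [sq_abs] using this
  have e : Real.cos h - 1 = (Real.cos h - (1 - h^2/2)) - h^2/2 := by ring
  have habs : |h^2/2| = h^2/2 := abs_of_nonneg (by positivity)
  calc |Real.cos h - 1| = |(Real.cos h - (1 - h^2/2)) - h^2/2| := by rw [← e]
    _ ≤ |Real.cos h - (1 - h^2/2)| + |h^2/2| := abs_sub _ _
    _ ≤ |h|^4 * (5/96) + h^2/2 := by rw [habs]; linarith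
    _ ≤ h^2 := by nlinarith

lemma sin1_taylor (h : ℝ) (hh : |h| ≤ 1) : |Real.sin h - h| ≤ h^2 := by
  have hs := Real.sin_bound hh
  have h4 : |h|^4 ≤ h^2 := by
    have : |h|^4 ≤ |h|^2 := pow_le_pow_of_le_one (abs_nonneg h) hh (by norm_num)
    simpa [sq_abs] using this
  have h3 : |h^3/6| ≤ h^2/6 := by
    rw [abs_div, abs_pow]
    have : |h|^3 ≤ |h|^2 := pow_le_pow_of_le_one (abs_nonneg h) hh (by norm_num)
    rw [sq_abs] at this
    rw [abs_of_nonneg (by norm_num : (0:ℝ) ≤ 6)]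
    linarith
  have e : Real.sin h - h = (Real.sin h - (h - h^3/6)) - h^3/6 := by ring
  calc |Real.sin h - h| = |(Real.sin h - (h - h^3/6)) - h^3/6| := by rw [← e]
    _ ≤ |Real.sin h - (h - h^3/6)| + |h^3/6| := abs_sub _ _
    _ ≤ |h|^4 * (5/96) + h^2/6 := by
      linarith [pow_le_pow_of_le_one (abs_nonneg h) hh (by norm_num : 4 ≤ 5), pow_nonneg (abs_nonneg h) 4]
    _ ≤ h^2 := by nlinarith

lemma cos_taylor2 (s h : ℝ) (hh : |h| ≤ 1) :
    |Real.cos (s + h) - Real.cos s + h * Real.sin s| ≤ 2 * h^2 := by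
  have h1 := cos1_taylor h hh
  have h2 := sin1_taylor h hh
  have e : Real.cos (s + h) - Real.cos s + h * Real.sin s
      = Real.cos s * (Real.cos h - 1) - Real.sin s * (Real.sin h - h) := by
    rw [Real.cos_add]; ring
  rw [e]
  calc |Real.cos s * (Real.cos h - 1) - Real.sin s * (Real.sin h - h)|
      ≤ |Real.cos s * (Real.cos h - 1)| + |Real.sin s * (Real.sin h - h)| := abs_sub _ _
    _ ≤ |Real.cos h - 1| + |Real.sin h - h| := by
        rw [abs_mul, abs_mul]
        have c1 := Real.abs_cos_le_one s
        have s1 := Real.abs_sin_le_one s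
        nlinarith [abs_nonneg (Real.cos h - 1), abs_nonneg (Real.sin h - h)]
    _ ≤ 2 * h^2 := by linarith

lemma sin_taylor2 (s h : ℝ) (hh : |h| ≤ 1) :
    |Real.sin (s + h) - Real.sin s - h * Real.cos s| ≤ 2 * h^2 := by
  have h1 := cos1_taylor h hh
  have h2 := sin1_taylor h hh
  have e : Real.sin (s + h) - Real.sin s - h * Real.cos s
      = Real.sin s * (Real.cos h - 1) + Real.cos s * (Real.sin h - h) := by
    rw [Real.sin_add]; ring
  rw [e]
  calc |Real.sin s * (Real.cos h - 1) + Real.cos s * (Real.sin h - h)|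
      ≤ |Real.sin s * (Real.cos h - 1)| + |Real.cos s * (Real.sin h - h)| := abs_add_le _ _
    _ ≤ |Real.cos h - 1| + |Real.sin h - h| := by
        rw [abs_mul, abs_mul]
        have c1 := Real.abs_cos_le_one s
        have s1 := Real.abs_sin_le_one s
        nlinarith [abs_nonneg (Real.cos h - 1), abs_nonneg (Real.sin h - h)]
    _ ≤ 2 * h^2 := by linarith

lemma collinear_of_orth (N d w : EuclideanSpace ℝ (Fin 2)) (hN : N ≠ 0) (hd : d ≠ 0)
    (h1 : ⟪d, N⟫ = 0) (h2 : ⟪w, N⟫ = 0) : w = (⟪w, d⟫ / ‖d‖^2) • d := by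
  have hdd : (0:ℝ) < ‖d‖^2 := by
    have : 0 < ‖d‖ := norm_pos_iff.mpr hd
    positivity
  have hdN : d 0 * N 0 + d 1 * N 1 = 0 := by rw [← inner2]; exact h1
  have hw : w 0 * N 0 + w 1 * N 1 = 0 := by rw [← inner2]; exact h2
  have hNne : N 0 ≠ 0 ∨ N 1 ≠ 0 := by
    by_contra hc
    push_neg at hc
    exact hN (by ext i; fin_cases i <;> simp [hc.1, hc.2])
  have hcross : d 0 * w 1 - d 1 * w 0 = 0 := by
    have hc1 : (d 0 * w 1 - d 1 * w 0) * N 0 = 0 := by linear_combination w 1 * hdN - d 1 * hw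
    have hc2 : (d 0 * w 1 - d 1 * w 0) * N 1 = 0 := by linear_combination d 0 * hw - w 0 * hdN
    rcases hNne with h|h
    · exact (mul_eq_zero.mp hc1).resolve_right h
    · exact (mul_eq_zero.mp hc2).resolve_right h
  have hnd : ‖d‖^2 = d 0 ^2 + d 1^2 := normsq2 d
  have hwd : ⟪w, d⟫ = w 0 * d 0 + w 1 * d 1 := inner2 w d
  ext i
  fin_cases i <;> simp only [PiLp.smul_apply, smul_eq_mul]
  · show w 0 = ⟪w,d⟫/‖d‖^2 * d 0
    rw [hwd, hnd]
    rw [div_mul_eq_mul_div, eq_div_iff (by rw [← hnd]; exact ne_of_gt hdd)]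
    linear_combination (-(d 1)) * hcross
  · show w 1 = ⟪w,d⟫/‖d‖^2 * d 1
    rw [hwd, hnd]
    rw [div_mul_eq_mul_div, eq_div_iff (by rw [← hnd]; exact ne_of_gt hdd)]
    linear_combination d 0 * hcross

lemma line_proj (q d f z w : EuclideanSpace ℝ (Fin 2)) (hd : d ≠ 0)
    (L : Set (EuclideanSpace ℝ (Fin 2))) (hL : L = {p | ∃ t : ℝ, p = q + t • d})
    (hfL : f ∈ L) (hwL : w ∈ L) (hmin : ∀ y ∈ L, dist z w ≤ dist z y) :
    w = f + (⟪z - f, d⟫ / ‖d‖^2) • d := by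
  have hdd : (0:ℝ) < ‖d‖^2 := by
    have : 0 < ‖d‖ := norm_pos_iff.mpr hd
    positivity
  obtain ⟨t0, ht0⟩ : ∃ t : ℝ, w = q + t • d := by rw [hL] at hwL; exact hwL
  obtain ⟨tf, htf⟩ : ∃ t : ℝ, f = q + t • d := by rw [hL] at hfL; exact hfL
  have horth : ⟪z - w, d⟫ = 0 := by
    by_contra hc
    set c := ⟪z - w, d⟫ with hcdef
    have hmem : q + (t0 + c / ‖d‖^2) • d ∈ L := by rw [hL]; exact ⟨_, rfl⟩
    have h1 := hmin _ hmem
    rw [dist_eq_norm, dist_eq_norm] at h1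
    have he : z - (q + (t0 + c / ‖d‖^2) • d) = (z - w) - (c / ‖d‖^2) • d := by
      rw [ht0]; module
    rw [he] at h1
    have hns : ‖z - w - (c / ‖d‖^2) • d‖^2 = ‖z - w‖^2 - c^2 / ‖d‖^2 := by
      rw [norm_sub_sq_real, real_inner_smul_right, norm_smul]
      rw [← hcdef]
      rw [mul_pow, Real.norm_eq_abs, sq_abs]
      field_simp
      ring
    have h2 : ‖z - w‖^2 ≤ ‖z - w - (c / ‖d‖^2) • d‖^2 := by
      apply sq_le_sq' <;> nlinarith [norm_nonneg (z - w), norm_nonneg (z - w - (c / ‖d‖^2) • d)]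
    rw [hns] at h2
    have h3 : c^2 / ‖d‖^2 ≤ 0 := by linarith
    have h4 : c^2 ≤ 0 := by
      have : c^2 = (c^2 / ‖d‖^2) * ‖d‖^2 := by field_simp
      rw [this]
      exact mul_nonpos_of_nonpos_of_nonneg h3 hdd.le
    exact hc (pow_eq_zero_iff (by norm_num) |>.mp (le_antisymm h4 (sq_nonneg c)))
  have hwf : w - f = (t0 - tf) • d := by rw [ht0, htf]; module
  have hinner : ⟪z - f, d⟫ = (t0 - tf) * ‖d‖^2 := by
    have hzf : z - f = (z - w) + (w - f) := by abel
    rw [hzf, inner_add_left, horth, hwf, real_inner_smul_left, real_inner_self_eq_norm_sq]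
    ring
  rw [hinner, mul_div_assoc, div_self (ne_of_gt hdd), mul_one, ← hwf]
  abel


lemma aux_cube (v δ : ℝ) (hv0 : 0 ≤ v) (hvδ : v ≤ δ) : v^3 ≤ δ*v^2 := by nlinarith
lemma aux_quart (v δ : ℝ) (hv0 : 0 ≤ v) (hv1 : v ≤ 1) (hvδ : v ≤ δ) : v^4 ≤ δ*v^2 := by
  nlinarith [aux_cube v δ hv0 hvδ, mul_le_mul_of_nonneg_right hv1 (pow_nonneg hv0 3)]
lemma aux_sq_le (α v : ℝ) (h : |α| ≤ v) : α^2 ≤ v^2 := by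
  nlinarith [abs_nonneg α, sq_abs α]
lemma aux_rho (b τ α v : ℝ) (hb : 0 < b) (hτ : 0 < τ) (hα : α^2 ≤ v^2) :
    2*(α/τ)^2 + b*(2*(α/τ)^2) ≤ (2*(1+b)/τ^2)*v^2 := by
  have h1 : 2*(α/τ)^2 + b*(2*(α/τ)^2) = (2*(1+b))*α^2/τ^2 := by
    field_simp
  have h2 : (2*(1+b)/τ^2)*v^2 = (2*(1+b))*v^2/τ^2 := by ring
  rw [h1, h2, div_le_div_iff₀ (pow_pos hτ 2) (pow_pos hτ 2)]
  nlinarith [mul_le_mul_of_nonneg_left hα (by positivity : (0:ℝ) ≤ 2*(1+b)), sq_nonneg τ]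
lemma aux_gamma (C2 C3 δ v B β ε αγ : ℝ) (hC2 : 0 ≤ C2) (hC3 : 0 ≤ C3)
    (hv0 : 0 ≤ v) (hv1 : v ≤ 1) (hvδ : v ≤ δ)
    (hβ : |β| ≤ v) (hε : |ε| ≤ C2*v^2) (hB0 : 0 ≤ B) (hBle : B ≤ |β| + C3*v^2)
    (hparse : B^2 = αγ^2 + (β-ε)^2) : αγ^2 ≤ (2*C3 + C3^2 + 2*C2)*(δ*v^2) := by
  have hB2 : B^2 ≤ (|β| + C3*v^2)^2 := pow_le_pow_left₀ hB0 hBle 2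
  have h1 : |β| * |ε| ≤ v * (C2*v^2) := mul_le_mul hβ hε (abs_nonneg ε) hv0
  have h2 : |β| * (C3*v^2) ≤ v * (C3*v^2) :=
    mul_le_mul_of_nonneg_right hβ (by positivity)
  have h3 : v^3 ≤ δ*v^2 := aux_cube v δ hv0 hvδ
  have h4 : v^4 ≤ δ*v^2 := aux_quart v δ hv0 hv1 hvδ
  have h5 : C3*v^3 ≤ C3*(δ*v^2) := mul_le_mul_of_nonneg_left h3 hC3
  have h6 : (C3^2)*v^4 ≤ (C3^2)*(δ*v^2) := mul_le_mul_of_nonneg_left h4 (sq_nonneg C3)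
  have h7 : C2*v^3 ≤ C2*(δ*v^2) := mul_le_mul_of_nonneg_left h3 hC2
  nlinarith [sq_abs β, le_abs_self (β*ε), abs_mul β ε, sq_nonneg (β-ε), sq_nonneg ε]
lemma aux_ideal (c s α β J v : ℝ) (hcs : c^2+s^2 = 1) (hJ0 : 0 ≤ J)
    (hJ : J^2 = ((α*c-β*s)*c)^2 + (β+(α*c-β*s)*s)^2) (hv : v^2 = α^2+β^2) (hv0 : 0 ≤ v) :
    J ≤ |c| * v := by
  have h3 : ((α*c-β*s)*c)^2 + (β+(α*c-β*s)*s)^2 = c^2*(α^2+β^2) := by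
    linear_combination ((α*c-β*s)^2 - β^2) * hcs
  have h4 : J^2 = (|c| * v)^2 := by
    rw [hJ, h3, ← hv, mul_pow, sq_abs]
  nlinarith [mul_nonneg (abs_nonneg c) hv0]
lemma aux_abs_le_one (c s : ℝ) (hcs : c^2+s^2 = 1) : |s| ≤ 1 := by
  nlinarith [sq_abs s, sq_nonneg c, abs_nonneg s]
lemma aux_err (γα ε c s : ℝ) (hc : |c| ≤ 1) (hs : |s| ≤ 1) :
    |2*γα*c + 2*ε*s| ≤ 2 * |γα| + 2 * |ε| := by
  calc |2*γα*c + 2*ε*s| ≤ |2*γα*c| + |2*ε*s| := abs_add_le _ _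
    _ = 2 * |γα| * |c| + 2 * |ε| * |s| := by
        rw [abs_mul, abs_mul, abs_mul, abs_mul]
        rw [abs_of_nonneg (by norm_num : (0:ℝ) ≤ 2)]
    _ ≤ 2 * |γα| + 2 * |ε| := by
        nlinarith [abs_nonneg γα, abs_nonneg ε]
lemma aux_eps (C2 v δ : ℝ) (hC2 : 0 ≤ C2) (hv0 : 0 ≤ v) (hvδ : v ≤ δ) :
    C2*v^2 ≤ C2*δ*v := by nlinarith [mul_le_mul_of_nonneg_left hvδ hC2, hv0]
lemma aux_small (S P p : ℝ) (hS : 0 ≤ S) (hP : 0 < P) (hp0 : 0 ≤ p)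
    (hp : p ≤ P/(12*(S+1))) : 3*(S*p) ≤ P/4 := by
  have hq0 : (0:ℝ) < 12*(S+1) := by linarith
  have h3 : (P/(12*(S+1))) * (12*(S+1)) = P := div_mul_cancel₀ _ (ne_of_gt hq0)
  have h4 : S * p ≤ S * (P/(12*(S+1))) := mul_le_mul_of_nonneg_left hp hS
  nlinarith [div_nonneg hP.le hq0.le]

set_option maxHeartbeats 1000000 in
/-- For the ellipse `E = {(x,y) : x² + (y/b)² = 1}` and a line `L` through a
feasible point `f ∈ E ∩ L` which is not the tangent line to `E` at `f`, the
Douglas–Rachford algorithm `x_{n+1} = (1/2)(x_n + R_L R_E x_n)` (with nearest-point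
selections onto `E` and the metric projection onto `L`) is locally convergent at `f`:
all iterates started sufficiently close to `f` converge to `f`. -/
theorem douglasRachford_ellipse_line_local_convergence
    (b : ℝ) (hb : 0 < b)
    (E : Set (EuclideanSpace ℝ (Fin 2)))
    (hE : E = {p : EuclideanSpace ℝ (Fin 2) | (p 0) ^ 2 + (p 1 / b) ^ 2 = 1})
    (L : Set (EuclideanSpace ℝ (Fin 2)))
    (q d : EuclideanSpace ℝ (Fin 2)) (hd : d ≠ 0)
    (hL : L = {p | ∃ t : ℝ, p = q + t • d})
    (f : EuclideanSpace ℝ (Fin 2)) (hfE : f ∈ E) (hfL : f ∈ L)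
    (htan : L ≠ {p : EuclideanSpace ℝ (Fin 2) |
      f 0 * (p 0 - f 0) + (f 1 / b ^ 2) * (p 1 - f 1) = 0})
    (PL : EuclideanSpace ℝ (Fin 2) → EuclideanSpace ℝ (Fin 2))
    (hPL : ∀ z, PL z ∈ L ∧ ∀ y ∈ L, dist z (PL z) ≤ dist z y) :
    ∃ δ > 0, ∀ x a : ℕ → EuclideanSpace ℝ (Fin 2),
      (∀ n, a n ∈ E) → (∀ n, ‖x n - a n‖ = infDist (x n) E) →
      (∀ n : ℕ, x (n + 1) =
        (1 / 2 : ℝ) • (x n + (2 • PL (2 • a n - x n) - (2 • a n - x n)))) →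
      ‖x 0 - f‖ < δ →
      Tendsto x atTop (𝓝 f) := by
  have hbne : b ≠ 0 := ne_of_gt hb
  have hfE' : (f 0)^2 + (f 1 / b)^2 = 1 := by rw [hE] at hfE; exact hfE
  have hEne : E.Nonempty := ⟨f, hfE⟩
  -- the normal vector
  set N : EuclideanSpace ℝ (Fin 2) := !₂[f 0, f 1 / b ^ 2] with hNdef
  have hN0 : N 0 = f 0 := rfl
  have hN1 : N 1 = f 1 / b ^ 2 := rfl
  clear_value N
  have hNpos : 0 < ‖N‖ := by
    have hNnormsq : ‖N‖^2 = (f 0)^2 + (f 1 / b^2)^2 := by rw [normsq2, hN0, hN1]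
    have h1 : (f 0)^2 + (f 1/b^2)^2 > 0 := by
      rcases eq_or_ne (f 0) 0 with h|h
      · have h2 : f 1 ≠ 0 := by
          intro h1; rw [h, h1] at hfE'; norm_num at hfE'
        have : f 1 / b^2 ≠ 0 := div_ne_zero h2 (by positivity)
        positivity
      · positivity
    nlinarith [norm_nonneg N]
  have hNne : N ≠ 0 := by intro h; rw [h] at hNpos; simp at hNpos
  -- parametrization angle
  obtain ⟨s0, hcos, hsin⟩ : ∃ s0, Real.cos s0 = f 0 ∧ Real.sin s0 = f 1 / b := by
    set z : ℂ := ⟨f 0, f 1 / b⟩ with hz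
    have habs : ‖z‖ = 1 := by
      have h2 : ‖z‖^2 = 1 := by
        rw [Complex.sq_norm, Complex.normSq_apply]
        show f 0 * f 0 + f 1 / b * (f 1 / b) = 1
        nlinarith [hfE']
      nlinarith [norm_nonneg z]
    have hzne : z ≠ 0 := by
      intro h; rw [h] at habs; simp at habs
    exact ⟨Complex.arg z, by rw [Complex.cos_arg hzne, habs]; exact div_one _,
      by rw [Complex.sin_arg, habs]; exact div_one _⟩
  have hf1 : f 1 = b * Real.sin s0 := by rw [hsin]; field_simp
  -- the tangent vector
  set T : EuclideanSpace ℝ (Fin 2) := !₂[-Real.sin s0, b * Real.cos s0] with hTdef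
  have hT0 : T 0 = -Real.sin s0 := rfl
  have hT1 : T 1 = b * Real.cos s0 := rfl
  clear_value T
  set τ := ‖T‖ with hτdef
  clear_value τ
  have hτpos : 0 < τ := by
    have hTnormsq : τ^2 = (Real.sin s0)^2 + b^2 * (Real.cos s0)^2 := by
      rw [hτdef, normsq2, hT0, hT1]; ring
    have h1 : 0 < (Real.sin s0)^2 + b^2 * (Real.cos s0)^2 := by
      nlinarith [Real.sin_sq_add_cos_sq s0, sq_nonneg (Real.sin s0), sq_nonneg (Real.cos s0),
        mul_pos hb hb, mul_nonneg (mul_pos hb hb).le (sq_nonneg (Real.cos s0))]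
    nlinarith [norm_nonneg T]
  have hTN : ⟪T, N⟫ = 0 := by
    rw [inner2, hT0, hT1, hN0, hN1, ← hcos, hf1]
    field_simp
    ring
  -- unit vectors
  set t : EuclideanSpace ℝ (Fin 2) := τ⁻¹ • T with htdef
  set nn : EuclideanSpace ℝ (Fin 2) := ‖N‖⁻¹ • N with hnndef
  clear_value t nn
  have htnorm : ‖t‖ = 1 := by
    rw [htdef, norm_smul, Real.norm_eq_abs, abs_of_pos (inv_pos.mpr hτpos), ← hτdef]
    field_simp
  have hnnnorm : ‖nn‖ = 1 := by
    rw [hnndef, norm_smul, Real.norm_eq_abs, abs_of_pos (inv_pos.mpr hNpos)]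
    field_simp
  have htnn : ⟪t, nn⟫ = 0 := by
    rw [htdef, hnndef, real_inner_smul_left, real_inner_smul_right, hTN]
    ring
  -- non-tangency
  have hdN : ⟪d, N⟫ ≠ 0 := by
    intro h0
    apply htan
    have htf : ∀ p : EuclideanSpace ℝ (Fin 2),
        (f 0 * (p 0 - f 0) + (f 1 / b ^ 2) * (p 1 - f 1) = ⟪N, p - f⟫) := by
      intro p
      rw [inner2, hN0, hN1]
      simp only [PiLp.sub_apply]
    ext p
    simp only [Set.mem_setOf_eq, hL]
    constructor
    · rintro ⟨tt, rfl⟩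
      rw [htf]
      obtain ⟨tf, htf2⟩ : ∃ s : ℝ, f = q + s • d := by rw [hL] at hfL; exact hfL
      have : q + tt • d - f = (tt - tf) • d := by rw [htf2]; module
      rw [this, real_inner_smul_right, real_inner_comm, h0]
      ring
    · intro hp
      rw [htf] at hp
      have hw : p - f = (⟪p - f, d⟫ / ‖d‖^2) • d := by
        apply collinear_of_orth N d (p - f) hNne hd h0
        rw [real_inner_comm]; exact hp
      obtain ⟨tf, htf2⟩ : ∃ s : ℝ, f = q + s • d := by rw [hL] at hfL; exact hfL
      refine ⟨tf + ⟪p - f, d⟫ / ‖d‖^2, ?_⟩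
      have h5 : q + (tf + ⟪p - f, d⟫ / ‖d‖^2) • d = f + (⟪p - f, d⟫ / ‖d‖^2) • d := by
        rw [htf2]; module
      rw [h5, ← hw]; abel
  -- direction of L
  set u : EuclideanSpace ℝ (Fin 2) := ‖d‖⁻¹ • d with hudef
  clear_value u
  have hdpos : 0 < ‖d‖ := norm_pos_iff.mpr hd
  have hunorm : ‖u‖ = 1 := by
    rw [hudef, norm_smul, Real.norm_eq_abs, abs_of_pos (inv_pos.mpr hdpos)]
    field_simp
  set c := ⟪u, t⟫ with hcdef
  set s := ⟪u, nn⟫ with hsdef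
  clear_value c s
  have hcs : c^2 + s^2 = 1 := by
    have := parseval2 t nn htnorm hnnnorm htnn u
    rw [hunorm] at this
    rw [hcdef, hsdef]
    nlinarith [this]
  have hsne : s ≠ 0 := by
    rw [hsdef, hnndef, hudef, real_inner_smul_left, real_inner_smul_right]
    intro h
    rcases mul_eq_zero.mp h with h|h
    · exact (inv_ne_zero (ne_of_gt hdpos)) h
    rcases mul_eq_zero.mp h with h|h
    · exact (inv_ne_zero (ne_of_gt hNpos)) h
    · exact hdN h
  have hcabs : |c| < 1 := by
    have h1 : c^2 < 1 := by nlinarith [sq_nonneg s, pow_pos (abs_pos.mpr hsne) 2, sq_abs s, abs_pos.mpr hsne]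
    nlinarith [abs_nonneg c, sq_abs c]
  -- projection formula
  have hPLf : ∀ z, PL z = f + ⟪z - f, u⟫ • u := by
    intro z
    have h1 := line_proj q d f z (PL z) hd L hL hfL (hPL z).1 (hPL z).2
    have h2 : ⟪z - f, d⟫ / ‖d‖^2 = (‖d‖⁻¹ * ⟪z - f, d⟫) * ‖d‖⁻¹ := by
      rw [pow_two]
      field_simp
    rw [h1, h2, hudef, real_inner_smul_right, smul_smul]
  -- constants
  set C2 : ℝ := 2*(1+1/b^2)/‖N‖ with hC2def
  clear_value C2
  have hC2 : 0 ≤ C2 := by rw [hC2def]; positivity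
  set C3 : ℝ := 2*(1+b)/τ^2 with hC3def
  clear_value C3
  have hC3 : 0 ≤ C3 := by rw [hC3def]; positivity
  set C5 : ℝ := 2*C3 + C3^2 + 2*C2 with hC5def
  clear_value C5
  have hC5 : 0 ≤ C5 := by rw [hC5def]; nlinarith [hC3, hC2, sq_nonneg C3]
  set S : ℝ := Real.sqrt C5 with hSdef
  clear_value S
  have hS : 0 ≤ S := by rw [hSdef]; exact Real.sqrt_nonneg _
  set P : ℝ := 1 - |c| with hPdef
  clear_value P
  have hP : 0 < P := by rw [hPdef]; linarith
  set δ : ℝ := min (min 1 τ) (min ((P/(12*(S+1)))^2) (P/(12*(C2+1)))) with hδdef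
  clear_value δ
  have hδpos : 0 < δ := by
    rw [hδdef]
    apply lt_min (lt_min one_pos hτpos)
    apply lt_min
    · exact pow_pos (div_pos hP (by linarith [hS])) 2
    · exact div_pos hP (by linarith [hC2])
  have hδ1 : δ ≤ 1 := by rw [hδdef]; exact le_trans (min_le_left _ _) (min_le_left _ _)
  have hδτ : δ ≤ τ := by rw [hδdef]; exact le_trans (min_le_left _ _) (min_le_right _ _)
  have hδ2 : δ ≤ (P/(12*(S+1)))^2 := by
    rw [hδdef]; exact le_trans (min_le_right _ _) (min_le_left _ _)
  have hδ3 : δ ≤ P/(12*(C2+1)) := by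
    rw [hδdef]; exact le_trans (min_le_right _ _) (min_le_right _ _)
  set k : ℝ := (1+|c|)/2 with hkdef
  clear_value k
  have hk0 : 0 ≤ k := by rw [hkdef]; positivity
  have hk1 : k < 1 := by rw [hkdef]; linarith
  refine ⟨δ, hδpos, ?_⟩
  -- key one-step estimate
  have key : ∀ xx aa x' : EuclideanSpace ℝ (Fin 2), aa ∈ E → ‖xx - aa‖ = infDist xx E →
      x' = (1/2:ℝ) • (xx + (2 • PL (2 • aa - xx) - (2 • aa - xx))) →
      ‖xx - f‖ < δ → ‖x' - f‖ ≤ k * ‖xx - f‖ := by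
    intro xx aa x' haE hnear hx' hclose
    have hv1 : ‖xx - f‖ ≤ 1 := le_trans hclose.le hδ1
    have hxa_le : ‖xx - aa‖ ≤ ‖xx - f‖ := by
      rw [hnear, ← dist_eq_norm]
      exact infDist_le_dist_of_mem hfE
    have hw2 : ‖aa - f‖ ≤ 2 * ‖xx - f‖ := by
      have e : aa - f = -(xx - aa) + (xx - f) := by abel
      rw [e]
      refine le_trans (norm_add_le _ _) ?_
      rw [norm_neg]
      linarith
    set α := ⟪xx - f, t⟫ with hαdef
    set β := ⟪xx - f, nn⟫ with hβdef
    set γ := ⟪aa - f, t⟫ with hγdef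
    set ε := ⟪aa - f, nn⟫ with hεdef
    clear_value α β γ ε
    have hv : xx - f = α • t + β • nn := by
      have h := expand2 t nn htnorm hnnnorm htnn (xx - f)
      rw [← hαdef, ← hβdef] at h
      exact h
    have hwexp : aa - f = γ • t + ε • nn := by
      have h := expand2 t nn htnorm hnnnorm htnn (aa - f)
      rw [← hγdef, ← hεdef] at h
      exact h
    have hu : u = c • t + s • nn := by
      have h := expand2 t nn htnorm hnnnorm htnn u
      rw [← hcdef, ← hsdef] at h
      exact h
    have hαv : |α| ≤ ‖xx - f‖ := by
      rw [hαdef]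
      calc |⟪xx - f, t⟫| ≤ ‖xx - f‖ * ‖t‖ := abs_real_inner_le_norm _ _
        _ = ‖xx - f‖ := by rw [htnorm, mul_one]
    have hβv : |β| ≤ ‖xx - f‖ := by
      rw [hβdef]
      calc |⟪xx - f, nn⟫| ≤ ‖xx - f‖ * ‖nn‖ := abs_real_inner_le_norm _ _
        _ = ‖xx - f‖ := by rw [hnnnorm, mul_one]
    have hvsq : ‖xx - f‖^2 = α^2 + β^2 := by
      have h := parseval2 t nn htnorm hnnnorm htnn (xx - f)
      rw [← hαdef, ← hβdef] at h
      exact h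
    -- epsilon bound from the ellipse equation
    have haE' : (aa 0)^2 + (aa 1 / b)^2 = 1 := by rw [hE] at haE; exact haE
    have e0 : (aa - f) 0 = aa 0 - f 0 := rfl
    have e1 : (aa - f) 1 = aa 1 - f 1 := rfl
    have hNw : ⟪aa - f, N⟫ = -(((aa 0 - f 0)^2 + (aa 1 - f 1)^2 / b^2)/2) := by
      rw [inner2, hN0, hN1, e0, e1]
      linear_combination (1/2) * haE' - (1/2) * hfE'
    have hwnormsq : ‖aa - f‖^2 = (aa 0 - f 0)^2 + (aa 1 - f 1)^2 := by
      rw [normsq2, e0, e1]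
    have hNwabs : |⟪aa - f, N⟫| ≤ (1+1/b^2)/2 * ‖aa - f‖^2 := by
      rw [hNw, hwnormsq]
      have hA : (0:ℝ) ≤ ((aa 0 - f 0)^2 + (aa 1 - f 1)^2 / b^2)/2 := by positivity
      rw [abs_neg, abs_of_nonneg hA]
      have e : (1+1/b^2)/2 * ((aa 0 - f 0)^2 + (aa 1 - f 1)^2)
          = ((aa 0 - f 0)^2 + (aa 1 - f 1)^2)/2
            + ((aa 0 - f 0)^2/b^2 + (aa 1 - f 1)^2/b^2)/2 := by
        field_simp
      rw [e]
      have h1 : (0:ℝ) ≤ (aa 0 - f 0)^2 / b^2 := by positivity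
      have h2 : (0:ℝ) ≤ (aa 1 - f 1)^2 := sq_nonneg _
      linarith
    have hε : |ε| ≤ C2 * ‖xx - f‖^2 := by
      have h1 : ε = ‖N‖⁻¹ * ⟪aa - f, N⟫ := by rw [hεdef, hnndef, real_inner_smul_right]
      have hw4 : ‖aa - f‖^2 ≤ 4 * ‖xx - f‖^2 := by
        calc ‖aa - f‖^2 ≤ (2*‖xx - f‖)^2 := pow_le_pow_left₀ (norm_nonneg (aa - f)) hw2 2
          _ = 4 * ‖xx - f‖^2 := by ring
      rw [h1, abs_mul, abs_of_pos (inv_pos.mpr hNpos)]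
      have h2 : ‖N‖⁻¹ * |⟪aa - f, N⟫| ≤ ‖N‖⁻¹ * ((1+1/b^2)/2 * (4*‖xx - f‖^2)) := by
        apply mul_le_mul_of_nonneg_left _ (inv_pos.mpr hNpos).le
        calc |⟪aa - f, N⟫| ≤ (1+1/b^2)/2 * ‖aa - f‖^2 := hNwabs
          _ ≤ (1+1/b^2)/2 * (4*‖xx - f‖^2) := by
              apply mul_le_mul_of_nonneg_left hw4 (by positivity)
      refine le_trans h2 (le_of_eq ?_)
      rw [hC2def]
      field_simp
      ring
    -- comparison point on the ellipse
    set hh : ℝ := α / τ with hhdef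
    clear_value hh
    have hhabs : |hh| ≤ 1 := by
      rw [hhdef, abs_div, abs_of_pos hτpos, div_le_one hτpos]
      calc |α| ≤ ‖xx - f‖ := hαv
        _ ≤ δ := hclose.le
        _ ≤ τ := hδτ
    set ee : EuclideanSpace ℝ (Fin 2) := !₂[Real.cos (s0+hh), b * Real.sin (s0+hh)] with heedef
    have he0 : ee 0 = Real.cos (s0+hh) := by rw [heedef]; rfl
    have he1 : ee 1 = b * Real.sin (s0+hh) := by rw [heedef]; rfl
    clear_value ee
    have heE : ee ∈ E := by
      rw [hE, Set.mem_setOf_eq, he0, he1]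
      have hbs : b * Real.sin (s0+hh) / b = Real.sin (s0+hh) := by field_simp
      rw [hbs]
      exact Real.cos_sq_add_sin_sq _
    have hρ0 : (ee - f - α • t) 0 = Real.cos (s0+hh) - Real.cos s0 + hh * Real.sin s0 := by
      simp only [PiLp.sub_apply, PiLp.smul_apply, smul_eq_mul, htdef]
      rw [he0, ← hcos, hT0, hhdef]
      field_simp
      ring
    have hρ1 : (ee - f - α • t) 1
        = b * (Real.sin (s0+hh) - Real.sin s0 - hh * Real.cos s0) := by
      simp only [PiLp.sub_apply, PiLp.smul_apply, smul_eq_mul, htdef]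
      rw [he1, hf1, hT1, hhdef]
      field_simp
    have hρ : ‖ee - f - α • t‖ ≤ C3 * ‖xx - f‖^2 := by
      have hα2 : α^2 ≤ ‖xx - f‖^2 := aux_sq_le α ‖xx - f‖ hαv
      calc ‖ee - f - α • t‖ ≤ |(ee - f - α • t) 0| + |(ee - f - α • t) 1| := norm_le2 _
        _ ≤ 2*hh^2 + b*(2*hh^2) := by
            rw [hρ0, hρ1, abs_mul, abs_of_pos hb]
            have h1 := cos_taylor2 s0 hh hhabs
            have h2 := sin_taylor2 s0 hh hhabs
            have h3 : b * |Real.sin (s0+hh) - Real.sin s0 - hh * Real.cos s0| ≤ b*(2*hh^2) :=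
              mul_le_mul_of_nonneg_left h2 hb.le
            linarith
        _ ≤ C3 * ‖xx - f‖^2 := by
            rw [hC3def, hhdef]
            exact aux_rho b τ α ‖xx - f‖ hb hτpos hα2
    -- distance comparison via the comparison point
    have hvw : ‖xx - aa‖ ≤ |β| + C3*‖xx - f‖^2 := by
      have h1 : ‖xx - aa‖ ≤ ‖xx - ee‖ := by
        rw [hnear, ← dist_eq_norm]
        exact infDist_le_dist_of_mem heE
      have h2 : xx - ee = β • nn - (ee - f - α • t) := by
        have h3 : xx - ee = (xx - f) - (ee - f) := by abel
        rw [h3, hv]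
        module
      rw [h2] at h1
      calc ‖xx - aa‖ ≤ ‖β • nn - (ee - f - α • t)‖ := h1
        _ ≤ ‖β • nn‖ + ‖ee - f - α • t‖ := norm_sub_le _ _
        _ ≤ |β| + C3*‖xx - f‖^2 := by
            rw [norm_smul, Real.norm_eq_abs, hnnnorm, mul_one]
            linarith [hρ]
    -- bound on the tangential defect
    have hparse : ‖xx - aa‖^2 = (α-γ)^2 + (β-ε)^2 := by
      have h0 : xx - aa = (xx - f) - (aa - f) := by abel
      have hαγ : ⟪(xx - f) - (aa - f), t⟫ = α - γ := by
        rw [inner_sub_left, ← hαdef, ← hγdef]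
      have hβε : ⟪(xx - f) - (aa - f), nn⟫ = β - ε := by
        rw [inner_sub_left, ← hβdef, ← hεdef]
      rw [h0, parseval2 t nn htnorm hnnnorm htnn ((xx - f) - (aa - f)), hαγ, hβε]
    have hg : (γ-α)^2 ≤ C5 * (δ * ‖xx - f‖^2) := by
      rw [hC5def]
      exact aux_gamma C2 C3 δ ‖xx - f‖ ‖xx - aa‖ β ε (γ-α) hC2 hC3
        (norm_nonneg _) hv1 hclose.le hβv hε (norm_nonneg _) hvw
        (by rw [hparse]; ring)
    have hγα : |γ-α| ≤ S * Real.sqrt δ * ‖xx - f‖ := by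
      have h1 : |γ-α| = Real.sqrt ((γ-α)^2) := (Real.sqrt_sq_eq_abs _).symm
      rw [h1]
      calc Real.sqrt ((γ-α)^2) ≤ Real.sqrt (C5*(δ*‖xx - f‖^2)) := Real.sqrt_le_sqrt hg
        _ = S * Real.sqrt δ * ‖xx - f‖ := by
            rw [show C5*(δ*‖xx - f‖^2) = (C5*δ)*‖xx - f‖^2 by ring,
              Real.sqrt_mul (mul_nonneg hC5 hδpos.le) (‖xx - f‖^2), Real.sqrt_mul hC5 δ,
              Real.sqrt_sq (norm_nonneg _), hSdef]
    -- the DR step formula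
    have hstep : x' - f = (xx - aa) + ⟪(2:ℝ) • (aa - f) - (xx - f), u⟫ • u := by
      rw [hx', hPLf (2 • aa - xx)]
      have hRf : 2 • aa - xx - f = (2:ℝ) • (aa - f) - (xx - f) := by
        simp only [two_nsmul, two_smul]
        abel
      rw [hRf]
      simp only [two_nsmul]
      module
    have hiu : ⟪(2:ℝ) • (aa - f) - (xx - f), u⟫ = 2*(γ*c+ε*s) - (α*c+β*s) := by
      rw [inner_sub_left, real_inner_smul_left]
      have h1 : ⟪aa - f, u⟫ = γ*c + ε*s := by
        rw [hu, inner_add_right, real_inner_smul_right, real_inner_smul_right,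
          ← hγdef, ← hεdef]
        ring
      have h2 : ⟪xx - f, u⟫ = α*c + β*s := by
        rw [hu, inner_add_right, real_inner_smul_right, real_inner_smul_right,
          ← hαdef, ← hβdef]
        ring
      rw [h1, h2]
    have hdecomp : x' - f = (β • nn + (α*c - β*s) • u)
        + ((α - γ) • t + (-ε) • nn + (2*(γ-α)*c + 2*ε*s) • u) := by
      rw [hstep, hiu]
      have h1 : xx - aa = (xx - f) - (aa - f) := by abel
      rw [h1, hv, hwexp]
      module
    have hideal : ‖β • nn + (α*c - β*s) • u‖ ≤ |c| * ‖xx - f‖ := by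
      have h1 : β • nn + (α*c-β*s) • u = ((α*c-β*s)*c) • t + (β + (α*c-β*s)*s) • nn := by
        rw [hu]; module
      have h2 : ‖β • nn + (α*c-β*s) • u‖^2 = ((α*c-β*s)*c)^2 + (β+(α*c-β*s)*s)^2 := by
        rw [h1]; exact norm_comb2 t nn htnorm hnnnorm htnn _ _
      exact aux_ideal c s α β _ ‖xx - f‖ hcs (norm_nonneg _) h2 hvsq (norm_nonneg _)
    have herr : ‖(α - γ) • t + (-ε) • nn + (2*(γ-α)*c + 2*ε*s) • u‖ ≤ 3 * |γ-α| + 3 * |ε| := by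
      have hcle : |c| ≤ 1 := hcabs.le
      have hsle : |s| ≤ 1 := aux_abs_le_one c s hcs
      have h0 : |α - γ| = |γ - α| := abs_sub_comm α γ
      have h1 : |2*(γ-α)*c + 2*ε*s| ≤ 2 * |γ-α| + 2 * |ε| := aux_err (γ-α) ε c s hcle hsle
      calc ‖(α - γ) • t + (-ε) • nn + (2*(γ-α)*c + 2*ε*s) • u‖
          ≤ ‖(α - γ) • t + (-ε) • nn‖ + ‖(2*(γ-α)*c + 2*ε*s) • u‖ := norm_add_le _ _
        _ ≤ (‖(α - γ) • t‖ + ‖(-ε) • nn‖) + ‖(2*(γ-α)*c + 2*ε*s) • u‖ :=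
            add_le_add_left (norm_add_le _ _) _
        _ = |α - γ| + |ε| + |2*(γ-α)*c + 2*ε*s| := by
            rw [norm_smul, norm_smul, norm_smul, htnorm, hnnnorm, hunorm,
              Real.norm_eq_abs, Real.norm_eq_abs, Real.norm_eq_abs, abs_neg]
            ring
        _ ≤ 3 * |γ-α| + 3 * |ε| := by rw [h0]; linarith
    -- assemble
    have hεδ : |ε| ≤ C2 * δ * ‖xx - f‖ := by
      calc |ε| ≤ C2 * ‖xx - f‖^2 := hε
        _ ≤ C2 * δ * ‖xx - f‖ := aux_eps C2 ‖xx - f‖ δ hC2 (norm_nonneg _) hclose.le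
    have hfinal : ‖x' - f‖ ≤ (|c| + 3*(S*Real.sqrt δ) + 3*(C2*δ)) * ‖xx - f‖ := by
      rw [hdecomp]
      calc ‖(β • nn + (α*c - β*s) • u) + ((α - γ) • t + (-ε) • nn + (2*(γ-α)*c + 2*ε*s) • u)‖
          ≤ ‖β • nn + (α*c - β*s) • u‖ + ‖(α - γ) • t + (-ε) • nn + (2*(γ-α)*c + 2*ε*s) • u‖ :=
            norm_add_le _ _
        _ ≤ |c| * ‖xx - f‖ + (3 * |γ-α| + 3 * |ε|) := add_le_add hideal herr
        _ ≤ |c| * ‖xx - f‖ + (3*(S*Real.sqrt δ*‖xx - f‖) + 3*(C2*δ*‖xx - f‖)) := by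
            linarith [hγα, hεδ]
        _ = (|c| + 3*(S*Real.sqrt δ) + 3*(C2*δ)) * ‖xx - f‖ := by ring
    have hsq1 : 3*(S*Real.sqrt δ) ≤ P/4 := by
      apply aux_small S P (Real.sqrt δ) hS hP (Real.sqrt_nonneg δ)
      calc Real.sqrt δ ≤ Real.sqrt ((P/(12*(S+1)))^2) := Real.sqrt_le_sqrt hδ2
        _ = P/(12*(S+1)) := Real.sqrt_sq (le_of_lt (div_pos hP (by linarith)))
    have hsq2 : 3*(C2*δ) ≤ P/4 := aux_small C2 P δ hC2 hP hδpos.le hδ3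
    calc ‖x' - f‖ ≤ (|c| + 3*(S*Real.sqrt δ) + 3*(C2*δ)) * ‖xx - f‖ := hfinal
      _ ≤ k * ‖xx - f‖ := by
          apply mul_le_mul_of_nonneg_right _ (norm_nonneg _)
          rw [hkdef]
          rw [hPdef] at hsq1 hsq2
          linarith
  -- iterate
  intro x a ha hxa hrec hx0
  have hbound : ∀ n, ‖x n - f‖ ≤ k^n * ‖x 0 - f‖ ∧ ‖x n - f‖ < δ := by
    intro n
    induction n with
    | zero => exact ⟨by simp, hx0⟩
    | succ m ih =>
      have h1 := key (x m) (a m) (x (m+1)) (ha m) (hxa m) (hrec m) ih.2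
      constructor
      · calc ‖x (m+1) - f‖ ≤ k * ‖x m - f‖ := h1
          _ ≤ k * (k^m * ‖x 0 - f‖) := mul_le_mul_of_nonneg_left ih.1 hk0
          _ = k^(m+1) * ‖x 0 - f‖ := by ring
      · calc ‖x (m+1) - f‖ ≤ k * ‖x m - f‖ := h1
          _ ≤ 1 * ‖x m - f‖ := mul_le_mul_of_nonneg_right hk1.le (norm_nonneg _)
          _ < δ := by rw [one_mul]; exact ih.2
  have hlim : Tendsto (fun n => k^n * ‖x 0 - f‖) atTop (𝓝 0) := by
    have h := tendsto_pow_atTop_nhds_zero_of_lt_one hk0 hk1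
    simpa using h.mul_const ‖x 0 - f‖
  have hzero : Tendsto (fun n => ‖x n - f‖) atTop (𝓝 0) :=
    squeeze_zero (fun n => norm_nonneg _) (fun n => (hbound n).1) hlim
  rw [tendsto_iff_norm_sub_tendsto_zero]
  exact hzero
end
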